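/- arXiv:2601.15388 — 6 statements merged into one kernel-verified Lean document; each statement's English description precedes it below -/
import Mathlib

section
/- Let T be the final-size map built from positive parameters βᵢⱼ, γᵢ, μᵢ and initial data S₁₀, S₂₀ > 0, I₁₀, I₂₀ ≥ 0, R₁₀, R₂₀ ≥ 0 with I₁₀ + I₂₀ > 0, and assume hypothesis H2b: βᵢ₁/μ₁ + βᵢ₂/μ₂ < 1 for i = 1,2. Then T has exactly one fixed point S* in [0,S₁₀]×[0,S₂₀], this fixed point satisfies 0 < Sᵢ* < Sᵢ₀ for i = 1,2, and S* = lim_{n→∞} Tⁿ(0,0). -/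
open Filter

noncomputable def Tmap (β11 β12 β21 β22 μ1 μ2 S10 S20 ε1 ε2 Z1 Z2 N10 N20 : ℝ) :
    ℝ × ℝ → ℝ × ℝ := fun X =>
  (S10 * ((ε1 * X.1 + Z1) / N10) ^ (β11 / μ1) * ((ε2 * X.2 + Z2) / N20) ^ (β12 / μ2),
   S20 * ((ε1 * X.1 + Z1) / N10) ^ (β21 / μ1) * ((ε2 * X.2 + Z2) / N20) ^ (β22 / μ2))

/-- The scalar map `t ↦ log ((c * exp t + Z) / N)` is 1-Lipschitz when `c, Z, N > 0`. -/
lemma logexp_lip (c Z N : ℝ) (hc : 0 < c) (hZ : 0 < Z) (hN : 0 < N) :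
    LipschitzWith 1 (fun t => Real.log ((c * Real.exp t + Z) / N)) := by
  have hderiv : ∀ t : ℝ, HasDerivAt (fun t => Real.log ((c * Real.exp t + Z) / N))
      ((c * Real.exp t) / (c * Real.exp t + Z)) t := by
    intro t
    have hpos : 0 < c * Real.exp t + Z := by positivity
    have h1 : HasDerivAt (fun t => c * Real.exp t + Z) (c * Real.exp t) t :=
      ((Real.hasDerivAt_exp t).const_mul c).add_const Z
    have h2 : HasDerivAt (fun t => (c * Real.exp t + Z) / N) ((c * Real.exp t) / N) t :=
      h1.div_const N
    have h3 := h2.log (by positivity : ((c * Real.exp t + Z) / N) ≠ 0)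
    have heq : (c * Real.exp t) / (c * Real.exp t + Z)
        = ((c * Real.exp t) / N) / ((c * Real.exp t + Z) / N) := by
      field_simp
    rw [heq]
    exact h3
  apply lipschitzWith_of_nnnorm_deriv_le (fun t => (hderiv t).differentiableAt)
  intro t
  rw [(hderiv t).deriv]
  have hpos : 0 < c * Real.exp t + Z := by positivity
  rw [← NNReal.coe_le_coe, coe_nnnorm, Real.norm_eq_abs, NNReal.coe_one,
    abs_of_nonneg (by positivity)]
  rw [div_le_one hpos]
  nlinarith [Real.exp_pos t]

set_option maxHeartbeats 2000000 in
lemma master (a1 b1 a2 b2 S10 S20 ε1 ε2 Z1 Z2 N10 N20 : ℝ)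
    (ha1 : 0 < a1) (hb1 : 0 < b1) (ha2 : 0 < a2) (hb2 : 0 < b2)
    (hS10 : 0 < S10) (hS20 : 0 < S20)
    (hε1 : 0 < ε1) (hε2 : 0 < ε2)
    (hZ1 : 0 < Z1) (hZ2 : 0 < Z2)
    (hN10 : 0 < N10) (hN20 : 0 < N20)
    (hle1 : ε1 * S10 + Z1 ≤ N10) (hle2 : ε2 * S20 + Z2 ≤ N20)
    (hlt : ε1 * S10 + Z1 < N10 ∨ ε2 * S20 + Z2 < N20)
    (hc1 : a1 + b1 < 1) (hc2 : a2 + b2 < 1)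
    (T : ℝ × ℝ → ℝ × ℝ)
    (hT : T = fun X => (S10 * ((ε1 * X.1 + Z1) / N10) ^ a1 * ((ε2 * X.2 + Z2) / N20) ^ b1,
                        S20 * ((ε1 * X.1 + Z1) / N10) ^ a2 * ((ε2 * X.2 + Z2) / N20) ^ b2)) :
    ∃ Sstar : ℝ × ℝ,
      (T Sstar = Sstar ∧
       (0 < Sstar.1 ∧ Sstar.1 < S10) ∧ (0 < Sstar.2 ∧ Sstar.2 < S20) ∧
       Tendsto (fun n => T^[n] (0, 0)) atTop (nhds Sstar)) ∧
      ∀ Y : ℝ × ℝ, Y.1 ∈ Set.Icc (0:ℝ) S10 → Y.2 ∈ Set.Icc (0:ℝ) S20 → T Y = Y → Y = Sstar := by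
  have g1lip := logexp_lip (ε1 * S10) Z1 N10 (by positivity) hZ1 hN10
  have g2lip := logexp_lip (ε2 * S20) Z2 N20 (by positivity) hZ2 hN20
  set F : ℝ × ℝ → ℝ × ℝ := fun u =>
    (Real.log ((ε1 * S10 * Real.exp (a1 * u.1 + b1 * u.2) + Z1) / N10),
     Real.log ((ε2 * S20 * Real.exp (a2 * u.1 + b2 * u.2) + Z2) / N20)) with hF
  have hc0 : (0:ℝ) ≤ max (a1 + b1) (a2 + b2) :=
    le_trans (by positivity) (le_max_left _ _)
  set c : NNReal := ⟨max (a1 + b1) (a2 + b2), hc0⟩ with hcdef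
  have hcc : (c : ℝ) = max (a1 + b1) (a2 + b2) := rfl
  have hclt : c < 1 := by
    rw [← NNReal.coe_lt_coe, hcc, NNReal.coe_one]
    exact max_lt hc1 hc2
  have habs : ∀ (A B : ℝ) (u v : ℝ × ℝ), 0 ≤ A → 0 ≤ B →
      |A * (u.1 - v.1) + B * (u.2 - v.2)| ≤ (A + B) * dist u v := by
    intro A B u v hA hB
    rw [Prod.dist_eq, Real.dist_eq, Real.dist_eq]
    calc |A * (u.1 - v.1) + B * (u.2 - v.2)|
        ≤ |A * (u.1 - v.1)| + |B * (u.2 - v.2)| := abs_add_le _ _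
      _ = A * |u.1 - v.1| + B * |u.2 - v.2| := by
          rw [abs_mul, abs_mul, abs_of_nonneg hA, abs_of_nonneg hB]
      _ ≤ A * max |u.1 - v.1| |u.2 - v.2| + B * max |u.1 - v.1| |u.2 - v.2| :=
          add_le_add (mul_le_mul_of_nonneg_left (le_max_left _ _) hA)
            (mul_le_mul_of_nonneg_left (le_max_right _ _) hB)
      _ = (A + B) * max |u.1 - v.1| |u.2 - v.2| := by ring
  have hFlip : LipschitzWith c F := by
    apply LipschitzWith.of_dist_le_mul
    intro u v
    rw [Prod.dist_eq]
    apply max_le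
    · have h1 : dist (F u).1 (F v).1
          ≤ dist (a1 * u.1 + b1 * u.2) (a1 * v.1 + b1 * v.2) := by
        simpa using g1lip.dist_le_mul (a1 * u.1 + b1 * u.2) (a1 * v.1 + b1 * v.2)
      have h2 : dist (a1 * u.1 + b1 * u.2) (a1 * v.1 + b1 * v.2)
          = |a1 * (u.1 - v.1) + b1 * (u.2 - v.2)| := by
        rw [Real.dist_eq]; congr 1; ring
      have h3 := habs a1 b1 u v ha1.le hb1.le
      have h4 : (a1 + b1) * dist u v ≤ (c : ℝ) * dist u v :=
        mul_le_mul_of_nonneg_right (by rw [hcc]; exact le_max_left _ _) dist_nonneg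
      linarith [h1, h2.le, h2.ge]
    · have h1 : dist (F u).2 (F v).2
          ≤ dist (a2 * u.1 + b2 * u.2) (a2 * v.1 + b2 * v.2) := by
        simpa using g2lip.dist_le_mul (a2 * u.1 + b2 * u.2) (a2 * v.1 + b2 * v.2)
      have h2 : dist (a2 * u.1 + b2 * u.2) (a2 * v.1 + b2 * v.2)
          = |a2 * (u.1 - v.1) + b2 * (u.2 - v.2)| := by
        rw [Real.dist_eq]; congr 1; ring
      have h3 := habs a2 b2 u v ha2.le hb2.le
      have h4 : (a2 + b2) * dist u v ≤ (c : ℝ) * dist u v :=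
        mul_le_mul_of_nonneg_right (by rw [hcc]; exact le_max_right _ _) dist_nonneg
      linarith [h1, h2.le, h2.ge]
  have hcontr : ContractingWith c F := ⟨hclt, hFlip⟩
  obtain ⟨us, hufix, htend, huniq⟩ : ∃ us : ℝ × ℝ, F us = us ∧
      (∀ x : ℝ × ℝ, Tendsto (fun n => F^[n] x) atTop (nhds us)) ∧
      (∀ v : ℝ × ℝ, F v = v → v = us) :=
    ⟨ContractingWith.fixedPoint F hcontr, hcontr.fixedPoint_isFixedPt,
     fun x => hcontr.tendsto_iterate_fixedPoint x, fun v hv => hcontr.fixedPoint_unique hv⟩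
  have hm1 : Real.log ((ε1 * S10 + Z1) / N10) ≤ 0 :=
    Real.log_nonpos (by positivity) (by rw [div_le_one hN10]; exact hle1)
  have hm2 : Real.log ((ε2 * S20 + Z2) / N20) ≤ 0 :=
    Real.log_nonpos (by positivity) (by rw [div_le_one hN20]; exact hle2)
  have hFinv : ∀ w : ℝ × ℝ, w.1 ≤ 0 → w.2 ≤ 0 →
      (F w).1 ≤ Real.log ((ε1 * S10 + Z1) / N10) ∧
      (F w).2 ≤ Real.log ((ε2 * S20 + Z2) / N20) := by
    intro w h1 h2
    have he1 : Real.exp (a1 * w.1 + b1 * w.2) ≤ 1 := by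
      rw [Real.exp_le_one_iff]
      nlinarith
    have he2 : Real.exp (a2 * w.1 + b2 * w.2) ≤ 1 := by
      rw [Real.exp_le_one_iff]
      nlinarith
    constructor
    · apply Real.log_le_log (by positivity)
      rw [div_le_div_iff_of_pos_right hN10]
      nlinarith [mul_pos hε1 hS10]
    · apply Real.log_le_log (by positivity)
      rw [div_le_div_iff_of_pos_right hN20]
      nlinarith [mul_pos hε2 hS20]
  have husle : us.1 ≤ 0 ∧ us.2 ≤ 0 := by
    have hiter : ∀ n : ℕ, (F^[n] ((0, 0) : ℝ × ℝ)).1 ≤ 0 ∧ (F^[n] ((0, 0) : ℝ × ℝ)).2 ≤ 0 := by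
      intro n
      induction n with
      | zero => simp
      | succ n ih =>
        rw [Function.iterate_succ_apply']
        obtain ⟨h1, h2⟩ := hFinv _ ih.1 ih.2
        exact ⟨h1.trans hm1, h2.trans hm2⟩
    have ht := htend ((0, 0) : ℝ × ℝ)
    constructor
    · exact le_of_tendsto ((continuous_fst.tendsto _).comp ht)
        (Eventually.of_forall fun n => (hiter n).1)
    · exact le_of_tendsto ((continuous_snd.tendsto _).comp ht)
        (Eventually.of_forall fun n => (hiter n).2)
  have husm : us.1 ≤ Real.log ((ε1 * S10 + Z1) / N10) ∧
      us.2 ≤ Real.log ((ε2 * S20 + Z2) / N20) := by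
    have h := hFinv us husle.1 husle.2
    rwa [hufix] at h
  have hL : ∀ A B : ℝ, 0 < A → 0 < B → A * us.1 + B * us.2 < 0 := by
    intro A B hA hB
    rcases hlt with h | h
    · have hm1' : Real.log ((ε1 * S10 + Z1) / N10) < 0 :=
        Real.log_neg (by positivity) (by rw [div_lt_one hN10]; exact h)
      have h1 : A * us.1 < 0 := mul_neg_of_pos_of_neg hA (lt_of_le_of_lt husm.1 hm1')
      have h2 : B * us.2 ≤ 0 := mul_nonpos_iff.mpr (Or.inl ⟨hB.le, husle.2⟩)
      linarith
    · have hm2' : Real.log ((ε2 * S20 + Z2) / N20) < 0 :=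
        Real.log_neg (by positivity) (by rw [div_lt_one hN20]; exact h)
      have h2 : B * us.2 < 0 := mul_neg_of_pos_of_neg hB (lt_of_le_of_lt husm.2 hm2')
      have h1 : A * us.1 ≤ 0 := mul_nonpos_iff.mpr (Or.inl ⟨hA.le, husle.1⟩)
      linarith
  have hL1 := hL a1 b1 ha1 hb1
  have hL2 := hL a2 b2 ha2 hb2
  set Sstar : ℝ × ℝ := (S10 * Real.exp (a1 * us.1 + b1 * us.2),
    S20 * Real.exp (a2 * us.1 + b2 * us.2)) with hSs
  have hTpsi : ∀ x : ℝ × ℝ, 0 < ε1 * x.1 + Z1 → 0 < ε2 * x.2 + Z2 →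
      T x = (S10 * Real.exp (a1 * Real.log ((ε1 * x.1 + Z1) / N10)
               + b1 * Real.log ((ε2 * x.2 + Z2) / N20)),
             S20 * Real.exp (a2 * Real.log ((ε1 * x.1 + Z1) / N10)
               + b2 * Real.log ((ε2 * x.2 + Z2) / N20))) := by
    intro x h1 h2
    have p1 : (0:ℝ) < (ε1 * x.1 + Z1) / N10 := by positivity
    have p2 : (0:ℝ) < (ε2 * x.2 + Z2) / N20 := by positivity
    rw [hT]
    simp only [Prod.mk.injEq]
    constructor
    · rw [Real.rpow_def_of_pos p1, Real.rpow_def_of_pos p2, mul_assoc, ← Real.exp_add]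
      ring_nf
    · rw [Real.rpow_def_of_pos p1, Real.rpow_def_of_pos p2, mul_assoc, ← Real.exp_add]
      ring_nf
  have hTPsiF : ∀ w : ℝ × ℝ,
      T (S10 * Real.exp (a1 * w.1 + b1 * w.2), S20 * Real.exp (a2 * w.1 + b2 * w.2)) =
      (S10 * Real.exp (a1 * (F w).1 + b1 * (F w).2),
       S20 * Real.exp (a2 * (F w).1 + b2 * (F w).2)) := by
    intro w
    have e1 : ε1 * (S10 * Real.exp (a1 * w.1 + b1 * w.2)) + Z1
        = ε1 * S10 * Real.exp (a1 * w.1 + b1 * w.2) + Z1 := by ring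
    have e2 : ε2 * (S20 * Real.exp (a2 * w.1 + b2 * w.2)) + Z2
        = ε2 * S20 * Real.exp (a2 * w.1 + b2 * w.2) + Z2 := by ring
    have h1 : 0 < ε1 * (S10 * Real.exp (a1 * w.1 + b1 * w.2), S20 * Real.exp (a2 * w.1 + b2 * w.2)).1 + Z1 := by
      simp only; positivity
    have h2 : 0 < ε2 * (S10 * Real.exp (a1 * w.1 + b1 * w.2), S20 * Real.exp (a2 * w.1 + b2 * w.2)).2 + Z2 := by
      simp only; positivity
    rw [hTpsi _ h1 h2]
    simp only [hF, e1, e2]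
  have hfix : T Sstar = Sstar := by
    rw [hSs, hTPsiF us, hufix]
  have hS1eq : Sstar.1 = S10 * Real.exp (a1 * us.1 + b1 * us.2) := by rw [hSs]
  have hS2eq : Sstar.2 = S20 * Real.exp (a2 * us.1 + b2 * us.2) := by rw [hSs]
  have hbd1 : 0 < Sstar.1 ∧ Sstar.1 < S10 := by
    rw [hS1eq]
    refine ⟨by positivity, ?_⟩
    have h := mul_lt_mul_of_pos_left (Real.exp_lt_one_iff.mpr hL1) hS10
    simpa using h
  have hbd2 : 0 < Sstar.2 ∧ Sstar.2 < S20 := by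
    rw [hS2eq]
    refine ⟨by positivity, ?_⟩
    have h := mul_lt_mul_of_pos_left (Real.exp_lt_one_iff.mpr hL2) hS20
    simpa using h
  set u0 : ℝ × ℝ := (Real.log (Z1 / N10), Real.log (Z2 / N20)) with hu0
  have hiterEq : ∀ n : ℕ, T^[n + 1] ((0, 0) : ℝ × ℝ) =
      (S10 * Real.exp (a1 * (F^[n] u0).1 + b1 * (F^[n] u0).2),
       S20 * Real.exp (a2 * (F^[n] u0).1 + b2 * (F^[n] u0).2)) := by
    intro n
    induction n with
    | zero =>
      have h0 : T^[0 + 1] ((0, 0) : ℝ × ℝ) = T (0, 0) := by norm_num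
      rw [h0, hTpsi (0, 0) (by simpa using hZ1) (by simpa using hZ2)]
      norm_num [hu0]
    | succ n ih =>
      rw [Function.iterate_succ_apply' T, ih, hTPsiF, ← Function.iterate_succ_apply' F]
  have hconv : Tendsto (fun n => T^[n] ((0, 0) : ℝ × ℝ)) atTop (nhds Sstar) := by
    have hcont : Continuous (fun w : ℝ × ℝ =>
        ((S10 * Real.exp (a1 * w.1 + b1 * w.2),
          S20 * Real.exp (a2 * w.1 + b2 * w.2)) : ℝ × ℝ)) := by
      fun_prop
    have ht := htend u0
    have h2 : Tendsto (fun n => T^[n + 1] ((0, 0) : ℝ × ℝ)) atTop (nhds Sstar) := by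
      have h3 : (fun n => T^[n + 1] ((0, 0) : ℝ × ℝ)) = fun n =>
          (S10 * Real.exp (a1 * (F^[n] u0).1 + b1 * (F^[n] u0).2),
           S20 * Real.exp (a2 * (F^[n] u0).1 + b2 * (F^[n] u0).2)) := funext hiterEq
      rw [h3, hSs]
      exact (hcont.tendsto us).comp ht
    exact (tendsto_add_atTop_iff_nat 1).mp h2
  refine ⟨Sstar, ⟨hfix, hbd1, hbd2, hconv⟩, ?_⟩
  intro Y hY1 hY2 hYfix
  have hq1 : 0 < ε1 * Y.1 + Z1 := by nlinarith [mul_nonneg hε1.le hY1.1]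
  have hq2 : 0 < ε2 * Y.2 + Z2 := by nlinarith [mul_nonneg hε2.le hY2.1]
  set v : ℝ × ℝ := (Real.log ((ε1 * Y.1 + Z1) / N10), Real.log ((ε2 * Y.2 + Z2) / N20)) with hv
  have hYeq : Y = (S10 * Real.exp (a1 * v.1 + b1 * v.2), S20 * Real.exp (a2 * v.1 + b2 * v.2)) := by
    rw [← hYfix, hTpsi Y hq1 hq2]
  have hY1' : Y.1 = S10 * Real.exp (a1 * v.1 + b1 * v.2) := by rw [hYeq]
  have hY2' : Y.2 = S20 * Real.exp (a2 * v.1 + b2 * v.2) := by rw [hYeq]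
  have hFv : F v = v := by
    have e1 : ε1 * S10 * Real.exp (a1 * v.1 + b1 * v.2) + Z1 = ε1 * Y.1 + Z1 := by
      rw [hY1']; ring
    have e2 : ε2 * S20 * Real.exp (a2 * v.1 + b2 * v.2) + Z2 = ε2 * Y.2 + Z2 := by
      rw [hY2']; ring
    simp only [hF, e1, e2]
    exact hv.symm
  have hvus : v = us := huniq v hFv
  rw [hYeq, hvus, hSs]

set_option maxHeartbeats 2000000 in
theorem stmt_14
    (β11 β12 β21 β22 γ1 γ2 μ1 μ2 : ℝ)
    (hβ11 : 0 < β11) (hβ12 : 0 < β12) (hβ21 : 0 < β21) (hβ22 : 0 < β22)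
    (hγ1 : 0 < γ1) (hγ2 : 0 < γ2) (hμ1 : 0 < μ1) (hμ2 : 0 < μ2)
    (S10 S20 I10 I20 R10 R20 : ℝ)
    (hS10 : 0 < S10) (hS20 : 0 < S20)
    (hI10 : 0 ≤ I10) (hI20 : 0 ≤ I20)
    (hR10 : 0 ≤ R10) (hR20 : 0 ≤ R20)
    (ε1 ε2 Z1 Z2 N10 N20 : ℝ)
    (hN10 : N10 = S10 + I10 + R10) (hN20 : N20 = S20 + I20 + R20)
    (hε1 : ε1 = μ1 / (γ1 + μ1)) (hε2 : ε2 = μ2 / (γ2 + μ2))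
    (hZ1 : Z1 = (1 - ε1) * N10 + ε1 * R10) (hZ2 : Z2 = (1 - ε2) * N20 + ε2 * R20)
    (hI0 : 0 < I10 + I20)
    (hH2b1 : β11 / μ1 + β12 / μ2 < 1) (hH2b2 : β21 / μ1 + β22 / μ2 < 1)
    (T : ℝ × ℝ → ℝ × ℝ)
    (hT : T = Tmap β11 β12 β21 β22 μ1 μ2 S10 S20 ε1 ε2 Z1 Z2 N10 N20)
    :
    ∃ Sstar : ℝ × ℝ,
      (T Sstar = Sstar ∧
       (0 < Sstar.1 ∧ Sstar.1 < S10) ∧ (0 < Sstar.2 ∧ Sstar.2 < S20) ∧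
       Tendsto (fun n => T^[n] (0, 0)) atTop (nhds Sstar)) ∧
      ∀ Y : ℝ × ℝ, Y.1 ∈ Set.Icc (0:ℝ) S10 → Y.2 ∈ Set.Icc (0:ℝ) S20 → T Y = Y → Y = Sstar := by
  have hN10pos : 0 < N10 := by rw [hN10]; linarith
  have hN20pos : 0 < N20 := by rw [hN20]; linarith
  have hε1pos : 0 < ε1 := by rw [hε1]; positivity
  have hε2pos : 0 < ε2 := by rw [hε2]; positivity
  have hε1lt : ε1 < 1 := by
    rw [hε1, div_lt_one (by linarith)]; linarith
  have hε2lt : ε2 < 1 := by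
    rw [hε2, div_lt_one (by linarith)]; linarith
  have hZ1pos : 0 < Z1 := by
    rw [hZ1]
    nlinarith [mul_nonneg hε1pos.le hR10]
  have hZ2pos : 0 < Z2 := by
    rw [hZ2]
    nlinarith [mul_nonneg hε2pos.le hR20]
  have hkey1 : ε1 * S10 + Z1 = N10 - ε1 * I10 := by rw [hZ1, hN10]; ring
  have hkey2 : ε2 * S20 + Z2 = N20 - ε2 * I20 := by rw [hZ2, hN20]; ring
  have hle1 : ε1 * S10 + Z1 ≤ N10 := by
    rw [hkey1]; nlinarith [mul_nonneg hε1pos.le hI10]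
  have hle2 : ε2 * S20 + Z2 ≤ N20 := by
    rw [hkey2]; nlinarith [mul_nonneg hε2pos.le hI20]
  have hlt : ε1 * S10 + Z1 < N10 ∨ ε2 * S20 + Z2 < N20 := by
    rcases lt_or_ge 0 I10 with h | h
    · left; rw [hkey1]; nlinarith [mul_pos hε1pos h]
    · right
      have hI20pos : 0 < I20 := by linarith
      rw [hkey2]; nlinarith [mul_pos hε2pos hI20pos]
  exact master (β11 / μ1) (β12 / μ2) (β21 / μ1) (β22 / μ2) S10 S20 ε1 ε2 Z1 Z2 N10 N20
    (by positivity) (by positivity) (by positivity) (by positivity)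
    hS10 hS20 hε1pos hε2pos hZ1pos hZ2pos hN10pos hN20pos
    hle1 hle2 hlt hH2b1 hH2b2 T (by rw [hT]; rfl)
end

section
/- Let T be the final-size map built from positive parameters βᵢⱼ, γᵢ, μᵢ and initial data S₁₀, S₂₀ > 0, I₁₀, I₂₀ ≥ 0, R₁₀, R₂₀ ≥ 0 with I₁₀ + I₂₀ > 0, and assume hypothesis H2c: βᵢ₁/((γ₁+μ₁)Z₁) + βᵢ₂/((γ₂+μ₂)Z₂) < 1/Sᵢ₀ for i = 1,2. Then T has exactly one fixed point S* in (0,S₁₀]×(0,S₂₀], this fixed point satisfies 0 < Sᵢ* < Sᵢ₀ for i = 1,2, and S* = lim_{n→∞} Tⁿ(0,0). -/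
open Filter

lemma rpow_abs_sub_le {p z : ℝ} (hp : 0 < p) (hz : 0 < z) {a b : ℝ}
    (ha : a ∈ Set.Icc z 1) (hb : b ∈ Set.Icc z 1) :
    |a ^ p - b ^ p| ≤ p / z * |a - b| := by
  wlog h : b ≤ a generalizing a b
  · rw [abs_sub_comm, abs_sub_comm a b]; exact this hb ha (le_of_not_ge h)
  rcases eq_or_lt_of_le h with rfl | hba
  · simp only [sub_self, abs_zero, mul_zero, le_refl]
  have hbz : 0 < b := lt_of_lt_of_le hz hb.1
  obtain ⟨c, hc, hderiv⟩ := exists_hasDerivAt_eq_slope (fun t => t ^ p)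
    (fun t => p * t ^ (p - 1)) hba
    (fun t _ => (Real.continuousAt_rpow_const t p (Or.inr hp.le)).continuousWithinAt)
    (fun t ht => Real.hasDerivAt_rpow_const (Or.inl (ne_of_gt (lt_trans hbz ht.1))))
  have hcz : z ≤ c := le_trans hb.1 hc.1.le
  have hc0 : 0 < c := lt_of_lt_of_le hz hcz
  have hc1 : c ≤ 1 := le_trans hc.2.le ha.2
  have hpow : a ^ p - b ^ p = p * c ^ (p - 1) * (a - b) := by
    rw [eq_div_iff (by intro h; apply absurd h; intro h; nlinarith : a - b ≠ 0)] at hderiv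
    linarith [hderiv]
  have hcb : c ^ (p - 1) ≤ 1 / z := by
    have : c ^ (p - 1) = c ^ p / c := by
      rw [Real.rpow_sub hc0, Real.rpow_one]
    rw [this]
    have h1 : c ^ p ≤ 1 := Real.rpow_le_one hc0.le hc1 hp.le
    have h2 : (0:ℝ) < c ^ p := Real.rpow_pos_of_pos hc0 p
    rw [div_le_div_iff₀ hc0 hz]
    nlinarith
  rw [hpow, abs_mul, abs_of_nonneg (by positivity : (0:ℝ) ≤ p * c ^ (p-1))]
  have : p * c ^ (p - 1) ≤ p / z := by
    rw [div_eq_mul_one_div]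
    exact mul_le_mul_of_nonneg_left hcb hp.le
  exact mul_le_mul_of_nonneg_right this (abs_nonneg _)

lemma base_mem {ε Z N S x : ℝ} (hε : 0 < ε) (hZ : 0 < Z) (hle : ε * S + Z ≤ N)
    (hx : x ∈ Set.Icc 0 S) : (ε * x + Z) / N ∈ Set.Icc (Z / N) 1 := by
  have hN : 0 < N := by nlinarith [hx.1, hx.2]
  constructor
  · gcongr
    nlinarith [hx.1]
  · rw [div_le_one hN]; nlinarith [hx.1, hx.2]

lemma factor_lip {p ε Z N S : ℝ} (hp : 0 < p) (hε : 0 < ε) (hZ : 0 < Z)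
    (hle : ε * S + Z ≤ N) {x y : ℝ} (hx : x ∈ Set.Icc 0 S) (hy : y ∈ Set.Icc 0 S) :
    |((ε * x + Z) / N) ^ p - ((ε * y + Z) / N) ^ p| ≤ p * ε / Z * |x - y| := by
  have hN : 0 < N := by nlinarith [hx.1, hx.2]
  have hz : 0 < Z / N := div_pos hZ hN
  have h := rpow_abs_sub_le hp hz (base_mem hε hZ hle hx) (base_mem hε hZ hle hy)
  have heq : |(ε * x + Z) / N - (ε * y + Z) / N| = ε / N * |x - y| := by
    have e : (ε * x + Z) / N - (ε * y + Z) / N = ε / N * (x - y) := by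
      field_simp
      ring
    rw [e, abs_mul, abs_of_nonneg (by positivity : (0:ℝ) ≤ ε / N)]
  rw [heq] at h
  calc _ ≤ p / (Z / N) * (ε / N * |x - y|) := h
    _ = p * ε / Z * |x - y| := by field_simp

lemma prod_sub_abs {a b c d : ℝ} (ha : a ∈ Set.Icc (0:ℝ) 1) (hb : b ∈ Set.Icc (0:ℝ) 1)
    (hc : c ∈ Set.Icc (0:ℝ) 1) (hd : d ∈ Set.Icc (0:ℝ) 1) :
    |a * c - b * d| ≤ |a - b| + |c - d| := by
  calc |a * c - b * d| = |(a - b) * c + b * (c - d)| := by ring_nf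
    _ ≤ |(a - b) * c| + |b * (c - d)| := abs_add_le _ _
    _ = |a - b| * |c| + |b| * |c - d| := by rw [abs_mul, abs_mul]
    _ ≤ |a - b| * 1 + 1 * |c - d| := by
        gcongr
        · exact abs_le.mpr ⟨by linarith [hc.1], hc.2⟩
        · exact abs_le.mpr ⟨by linarith [hb.1], hb.2⟩
    _ = |a - b| + |c - d| := by ring

lemma prodpow_lt_one {A B p q : ℝ} (hA : 0 < A) (hA1 : A ≤ 1) (hB : 0 < B) (hB1 : B ≤ 1)
    (h : A < 1 ∨ B < 1) (hp : 0 < p) (hq : 0 < q) : A ^ p * B ^ q < 1 := by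
  have hAp : 0 < A ^ p := Real.rpow_pos_of_pos hA p
  have hBq : 0 < B ^ q := Real.rpow_pos_of_pos hB q
  have hAp1 : A ^ p ≤ 1 := Real.rpow_le_one hA.le hA1 hp.le
  have hBq1 : B ^ q ≤ 1 := Real.rpow_le_one hB.le hB1 hq.le
  rcases h with h | h
  · have : A ^ p < 1 := Real.rpow_lt_one hA.le h hp
    nlinarith
  · have : B ^ q < 1 := Real.rpow_lt_one hB.le h hq
    nlinarith

set_option maxHeartbeats 1000000 in
theorem stmt_15
    (β11 β12 β21 β22 γ1 γ2 μ1 μ2 : ℝ)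
    (hβ11 : 0 < β11) (hβ12 : 0 < β12) (hβ21 : 0 < β21) (hβ22 : 0 < β22)
    (hγ1 : 0 < γ1) (hγ2 : 0 < γ2) (hμ1 : 0 < μ1) (hμ2 : 0 < μ2)
    (S10 S20 I10 I20 R10 R20 : ℝ)
    (hS10 : 0 < S10) (hS20 : 0 < S20)
    (hI10 : 0 ≤ I10) (hI20 : 0 ≤ I20)
    (hR10 : 0 ≤ R10) (hR20 : 0 ≤ R20)
    (ε1 ε2 Z1 Z2 N10 N20 : ℝ)
    (hN10 : N10 = S10 + I10 + R10) (hN20 : N20 = S20 + I20 + R20)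
    (hε1 : ε1 = μ1 / (γ1 + μ1)) (hε2 : ε2 = μ2 / (γ2 + μ2))
    (hZ1 : Z1 = (1 - ε1) * N10 + ε1 * R10) (hZ2 : Z2 = (1 - ε2) * N20 + ε2 * R20)
    (hI0 : 0 < I10 + I20)
    (hH2c1 : β11 / ((γ1 + μ1) * Z1) + β12 / ((γ2 + μ2) * Z2) < 1 / S10)
    (hH2c2 : β21 / ((γ1 + μ1) * Z1) + β22 / ((γ2 + μ2) * Z2) < 1 / S20)
    (T : ℝ × ℝ → ℝ × ℝ)
    (hT : T = Tmap β11 β12 β21 β22 μ1 μ2 S10 S20 ε1 ε2 Z1 Z2 N10 N20)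
    :
    ∃ Sstar : ℝ × ℝ,
      (T Sstar = Sstar ∧
       (0 < Sstar.1 ∧ Sstar.1 < S10) ∧ (0 < Sstar.2 ∧ Sstar.2 < S20) ∧
       Tendsto (fun n => T^[n] (0, 0)) atTop (nhds Sstar)) ∧
      ∀ Y : ℝ × ℝ, Y.1 ∈ Set.Ioc (0:ℝ) S10 → Y.2 ∈ Set.Ioc (0:ℝ) S20 → T Y = Y → Y = Sstar := by
  -- basic positivity facts
  have hγμ1 : 0 < γ1 + μ1 := by linarith
  have hγμ2 : 0 < γ2 + μ2 := by linarith
  have hε1pos : 0 < ε1 := by rw [hε1]; positivity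
  have hε2pos : 0 < ε2 := by rw [hε2]; positivity
  have hε1lt : ε1 < 1 := by rw [hε1, div_lt_one hγμ1]; linarith
  have hε2lt : ε2 < 1 := by rw [hε2, div_lt_one hγμ2]; linarith
  have hN10pos : 0 < N10 := by rw [hN10]; linarith
  have hN20pos : 0 < N20 := by rw [hN20]; linarith
  have hZ1pos : 0 < Z1 := by rw [hZ1]; linarith [mul_pos (by linarith : (0:ℝ) < 1 - ε1) hN10pos, mul_nonneg hε1pos.le hR10]
  have hZ2pos : 0 < Z2 := by rw [hZ2]; linarith [mul_pos (by linarith : (0:ℝ) < 1 - ε2) hN20pos, mul_nonneg hε2pos.le hR20]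
  have key1 : ε1 * S10 + Z1 = N10 - ε1 * I10 := by rw [hZ1, hN10]; ring
  have key2 : ε2 * S20 + Z2 = N20 - ε2 * I20 := by rw [hZ2, hN20]; ring
  have hle1 : ε1 * S10 + Z1 ≤ N10 := by rw [key1]; linarith [mul_nonneg hε1pos.le hI10]
  have hle2 : ε2 * S20 + Z2 ≤ N20 := by rw [key2]; linarith [mul_nonneg hε2pos.le hI20]
  -- exponents
  have hp11 : 0 < β11 / μ1 := by positivity
  have hp12 : 0 < β12 / μ2 := by positivity
  have hp21 : 0 < β21 / μ1 := by positivity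
  have hp22 : 0 < β22 / μ2 := by positivity
  have hT1 : ∀ X : ℝ × ℝ, (T X).1 = S10 * ((ε1 * X.1 + Z1) / N10) ^ (β11 / μ1) *
      ((ε2 * X.2 + Z2) / N20) ^ (β12 / μ2) := fun X => by rw [hT]; rfl
  have hT2 : ∀ X : ℝ × ℝ, (T X).2 = S20 * ((ε1 * X.1 + Z1) / N10) ^ (β21 / μ1) *
      ((ε2 * X.2 + Z2) / N20) ^ (β22 / μ2) := fun X => by rw [hT]; rfl
  -- Lipschitz constants of the factors
  have hL1 : β11 / μ1 * ε1 / Z1 = β11 / ((γ1 + μ1) * Z1) := by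
    rw [hε1]; field_simp
  have hL2 : β12 / μ2 * ε2 / Z2 = β12 / ((γ2 + μ2) * Z2) := by
    rw [hε2]; field_simp
  have hL3 : β21 / μ1 * ε1 / Z1 = β21 / ((γ1 + μ1) * Z1) := by
    rw [hε1]; field_simp
  have hL4 : β22 / μ2 * ε2 / Z2 = β22 / ((γ2 + μ2) * Z2) := by
    rw [hε2]; field_simp
  set K1 : ℝ := S10 * (β11 / ((γ1 + μ1) * Z1) + β12 / ((γ2 + μ2) * Z2)) with hK1def
  set K2 : ℝ := S20 * (β21 / ((γ1 + μ1) * Z1) + β22 / ((γ2 + μ2) * Z2)) with hK2def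
  have hK1pos : 0 < K1 := by rw [hK1def]; positivity
  have hK2pos : 0 < K2 := by rw [hK2def]; positivity
  have hK1lt : K1 < 1 := by
    have := mul_lt_mul_of_pos_left hH2c1 hS10
    rwa [mul_one_div, div_self hS10.ne'] at this
  have hK2lt : K2 < 1 := by
    have := mul_lt_mul_of_pos_left hH2c2 hS20
    rwa [mul_one_div, div_self hS20.ne'] at this
  set Kr : ℝ := max K1 K2 with hKrdef
  have hKrpos : 0 < Kr := lt_max_of_lt_left hK1pos
  have hKrlt : Kr < 1 := max_lt hK1lt hK2lt
  set K : NNReal := Real.toNNReal Kr with hKdef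
  have hKcoe : (K : ℝ) = Kr := Real.coe_toNNReal _ hKrpos.le
  -- the box
  set s : Set (ℝ × ℝ) := Set.Icc (0:ℝ) S10 ×ˢ Set.Icc (0:ℝ) S20 with hsdef
  -- base bounds
  have hbase1 : ∀ x ∈ Set.Icc (0:ℝ) S10,
      0 < (ε1 * x + Z1) / N10 ∧ (ε1 * x + Z1) / N10 ≤ 1 := by
    intro x hx
    have h := base_mem hε1pos hZ1pos hle1 hx
    exact ⟨lt_of_lt_of_le (div_pos hZ1pos hN10pos) h.1, h.2⟩
  have hbase2 : ∀ x ∈ Set.Icc (0:ℝ) S20,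
      0 < (ε2 * x + Z2) / N20 ∧ (ε2 * x + Z2) / N20 ≤ 1 := by
    intro x hx
    have h := base_mem hε2pos hZ2pos hle2 hx
    exact ⟨lt_of_lt_of_le (div_pos hZ2pos hN20pos) h.1, h.2⟩
  -- powers lie in (0,1]
  have hpow1 : ∀ p : ℝ, 0 < p → ∀ x ∈ Set.Icc (0:ℝ) S10,
      0 < ((ε1 * x + Z1) / N10) ^ p ∧ ((ε1 * x + Z1) / N10) ^ p ≤ 1 := by
    intro p hp x hx
    obtain ⟨h0, h1⟩ := hbase1 x hx
    exact ⟨Real.rpow_pos_of_pos h0 p, Real.rpow_le_one h0.le h1 hp.le⟩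
  have hpow2 : ∀ p : ℝ, 0 < p → ∀ x ∈ Set.Icc (0:ℝ) S20,
      0 < ((ε2 * x + Z2) / N20) ^ p ∧ ((ε2 * x + Z2) / N20) ^ p ≤ 1 := by
    intro p hp x hx
    obtain ⟨h0, h1⟩ := hbase2 x hx
    exact ⟨Real.rpow_pos_of_pos h0 p, Real.rpow_le_one h0.le h1 hp.le⟩
  -- T maps the box into itself
  have hmaps : Set.MapsTo T s s := by
    intro X hX
    obtain ⟨hX1, hX2⟩ := hX
    obtain ⟨hA0, hA1⟩ := hpow1 _ hp11 X.1 hX1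
    obtain ⟨hB0, hB1⟩ := hpow2 _ hp12 X.2 hX2
    obtain ⟨hC0, hC1⟩ := hpow1 _ hp21 X.1 hX1
    obtain ⟨hD0, hD1⟩ := hpow2 _ hp22 X.2 hX2
    refine ⟨Set.mem_Icc.mpr ⟨?_, ?_⟩, Set.mem_Icc.mpr ⟨?_, ?_⟩⟩
    · rw [hT1]; positivity
    · rw [hT1]
      calc S10 * ((ε1 * X.1 + Z1) / N10) ^ (β11 / μ1) * ((ε2 * X.2 + Z2) / N20) ^ (β12 / μ2)
          ≤ S10 * 1 * 1 :=
            mul_le_mul (mul_le_mul_of_nonneg_left hA1 hS10.le) hB1 hB0.le (by positivity)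
        _ = S10 := by ring
    · rw [hT2]; positivity
    · rw [hT2]
      calc S20 * ((ε1 * X.1 + Z1) / N10) ^ (β21 / μ1) * ((ε2 * X.2 + Z2) / N20) ^ (β22 / μ2)
          ≤ S20 * 1 * 1 :=
            mul_le_mul (mul_le_mul_of_nonneg_left hC1 hS20.le) hD1 hD0.le (by positivity)
        _ = S20 := by ring
  -- Lipschitz estimate
  have hlip : LipschitzOnWith K T s := by
    apply LipschitzOnWith.of_dist_le_mul
    intro X hX Y hY
    obtain ⟨hX1, hX2⟩ := hX
    obtain ⟨hY1, hY2⟩ := hY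
    have hd1 : |X.1 - Y.1| ≤ dist X Y := by
      rw [Prod.dist_eq, Real.dist_eq, Real.dist_eq]; exact le_max_left _ _
    have hd2 : |X.2 - Y.2| ≤ dist X Y := by
      rw [Prod.dist_eq, Real.dist_eq, Real.dist_eq]; exact le_max_right _ _
    have hdnn : 0 ≤ dist X Y := dist_nonneg
    have est : ∀ (S0 p q : ℝ), 0 < S0 → 0 < p → 0 < q →
        S0 * (p * ε1 / Z1 + q * ε2 / Z2) ≤ Kr →
        dist (S0 * ((ε1 * X.1 + Z1) / N10) ^ p * ((ε2 * X.2 + Z2) / N20) ^ q)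
             (S0 * ((ε1 * Y.1 + Z1) / N10) ^ p * ((ε2 * Y.2 + Z2) / N20) ^ q)
          ≤ Kr * dist X Y := by
      intro S0 p q hS0 hp hq hKle
      rw [Real.dist_eq]
      have e1 : S0 * ((ε1 * X.1 + Z1) / N10) ^ p * ((ε2 * X.2 + Z2) / N20) ^ q -
          S0 * ((ε1 * Y.1 + Z1) / N10) ^ p * ((ε2 * Y.2 + Z2) / N20) ^ q =
          S0 * (((ε1 * X.1 + Z1) / N10) ^ p * ((ε2 * X.2 + Z2) / N20) ^ q -
            ((ε1 * Y.1 + Z1) / N10) ^ p * ((ε2 * Y.2 + Z2) / N20) ^ q) := by ring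
      rw [e1, abs_mul, abs_of_nonneg hS0.le]
      have hprod := prod_sub_abs
        ⟨(hpow1 p hp X.1 hX1).1.le, (hpow1 p hp X.1 hX1).2⟩
        ⟨(hpow1 p hp Y.1 hY1).1.le, (hpow1 p hp Y.1 hY1).2⟩
        ⟨(hpow2 q hq X.2 hX2).1.le, (hpow2 q hq X.2 hX2).2⟩
        ⟨(hpow2 q hq Y.2 hY2).1.le, (hpow2 q hq Y.2 hY2).2⟩
      have hf1 := factor_lip hp hε1pos hZ1pos hle1 hX1 hY1
      have hf2 := factor_lip hq hε2pos hZ2pos hle2 hX2 hY2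
      have h1 : p * ε1 / Z1 * |X.1 - Y.1| ≤ p * ε1 / Z1 * dist X Y := by
        apply mul_le_mul_of_nonneg_left hd1; positivity
      have h1' : q * ε2 / Z2 * |X.2 - Y.2| ≤ q * ε2 / Z2 * dist X Y := by
        apply mul_le_mul_of_nonneg_left hd2; positivity
      calc S0 * |((ε1 * X.1 + Z1) / N10) ^ p * ((ε2 * X.2 + Z2) / N20) ^ q -
            ((ε1 * Y.1 + Z1) / N10) ^ p * ((ε2 * Y.2 + Z2) / N20) ^ q|
          ≤ S0 * ((p * ε1 / Z1 + q * ε2 / Z2) * dist X Y) := by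
            apply mul_le_mul_of_nonneg_left _ hS0.le
            calc _ ≤ |((ε1 * X.1 + Z1) / N10) ^ p - ((ε1 * Y.1 + Z1) / N10) ^ p| +
                  |((ε2 * X.2 + Z2) / N20) ^ q - ((ε2 * Y.2 + Z2) / N20) ^ q| := hprod
              _ ≤ p * ε1 / Z1 * |X.1 - Y.1| + q * ε2 / Z2 * |X.2 - Y.2| := by
                  exact add_le_add hf1 hf2
              _ ≤ p * ε1 / Z1 * dist X Y + q * ε2 / Z2 * dist X Y := add_le_add h1 h1'
              _ = (p * ε1 / Z1 + q * ε2 / Z2) * dist X Y := by ring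
        _ = S0 * (p * ε1 / Z1 + q * ε2 / Z2) * dist X Y := by ring
        _ ≤ Kr * dist X Y := mul_le_mul_of_nonneg_right hKle hdnn
    have est1 : S10 * (β11 / μ1 * ε1 / Z1 + β12 / μ2 * ε2 / Z2) ≤ Kr := by
      rw [hL1, hL2, ← hK1def]; exact le_max_left _ _
    have est2 : S20 * (β21 / μ1 * ε1 / Z1 + β22 / μ2 * ε2 / Z2) ≤ Kr := by
      rw [hL3, hL4, ← hK2def]; exact le_max_right _ _
    rw [hKcoe, Prod.dist_eq, hT1 X, hT1 Y, hT2 X, hT2 Y]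
    exact max_le (est S10 _ _ hS10 hp11 hp12 est1) (est S20 _ _ hS20 hp21 hp22 est2)
  -- contraction
  have hKlt1 : K < 1 := by
    rw [← NNReal.coe_lt_coe, hKcoe, NNReal.coe_one]; exact hKrlt
  have hcontr : ContractingWith K (hmaps.restrict T s s) :=
    ⟨hKlt1, hlip.mapsToRestrict hmaps⟩
  have hcomplete : IsComplete s := ((isClosed_Icc).prod (isClosed_Icc)).isComplete
  have hx0 : ((0:ℝ), (0:ℝ)) ∈ s :=
    ⟨⟨le_refl 0, hS10.le⟩, ⟨le_refl 0, hS20.le⟩⟩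
  obtain ⟨y, hys, hfix, htend, -⟩ :=
    hcontr.exists_fixedPoint' hcomplete hmaps hx0 (edist_ne_top _ _)
  -- analyze the fixed point
  obtain ⟨hy1, hy2⟩ := hys
  have hfix' : T y = y := hfix
  have hyeq1 : y.1 = S10 * ((ε1 * y.1 + Z1) / N10) ^ (β11 / μ1) *
      ((ε2 * y.2 + Z2) / N20) ^ (β12 / μ2) := by
    conv_lhs => rw [← hfix']
    rw [hT1]
  have hyeq2 : y.2 = S20 * ((ε1 * y.1 + Z1) / N10) ^ (β21 / μ1) *
      ((ε2 * y.2 + Z2) / N20) ^ (β22 / μ2) := by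
    conv_lhs => rw [← hfix']
    rw [hT2]
  obtain ⟨hA0, hA1⟩ := hbase1 y.1 hy1
  obtain ⟨hB0, hB1⟩ := hbase2 y.2 hy2
  -- strict upper bound via I10 + I20 > 0
  have hor : (ε1 * y.1 + Z1) / N10 < 1 ∨ (ε2 * y.2 + Z2) / N20 < 1 := by
    rcases lt_or_ge 0 I10 with h | h
    · left
      rw [div_lt_one hN10pos]
      have h2 : ε1 * y.1 ≤ ε1 * S10 := mul_le_mul_of_nonneg_left hy1.2 hε1pos.le
      linarith [mul_pos hε1pos h]
    · right
      have hI20pos : 0 < I20 := by linarith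
      rw [div_lt_one hN20pos]
      have h2 : ε2 * y.2 ≤ ε2 * S20 := mul_le_mul_of_nonneg_left hy2.2 hε2pos.le
      linarith [mul_pos hε2pos hI20pos]
  have hlt1 : ((ε1 * y.1 + Z1) / N10) ^ (β11 / μ1) *
      ((ε2 * y.2 + Z2) / N20) ^ (β12 / μ2) < 1 :=
    prodpow_lt_one hA0 hA1 hB0 hB1 hor hp11 hp12
  have hlt2 : ((ε1 * y.1 + Z1) / N10) ^ (β21 / μ1) *
      ((ε2 * y.2 + Z2) / N20) ^ (β22 / μ2) < 1 :=
    prodpow_lt_one hA0 hA1 hB0 hB1 hor hp21 hp22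
  have hpos1 : 0 < y.1 := by
    rw [hyeq1]
    have := (Real.rpow_pos_of_pos hA0 (β11 / μ1))
    have := (Real.rpow_pos_of_pos hB0 (β12 / μ2))
    positivity
  have hpos2 : 0 < y.2 := by
    rw [hyeq2]
    have := (Real.rpow_pos_of_pos hA0 (β21 / μ1))
    have := (Real.rpow_pos_of_pos hB0 (β22 / μ2))
    positivity
  have hstrict1 : y.1 < S10 := by
    rw [hyeq1, mul_assoc]
    calc S10 * (((ε1 * y.1 + Z1) / N10) ^ (β11 / μ1) * ((ε2 * y.2 + Z2) / N20) ^ (β12 / μ2))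
        < S10 * 1 := mul_lt_mul_of_pos_left hlt1 hS10
      _ = S10 := mul_one _
  have hstrict2 : y.2 < S20 := by
    rw [hyeq2, mul_assoc]
    calc S20 * (((ε1 * y.1 + Z1) / N10) ^ (β21 / μ1) * ((ε2 * y.2 + Z2) / N20) ^ (β22 / μ2))
        < S20 * 1 := mul_lt_mul_of_pos_left hlt2 hS20
      _ = S20 := mul_one _
  refine ⟨y, ⟨hfix', ⟨hpos1, hstrict1⟩, ⟨hpos2, hstrict2⟩, htend⟩, ?_⟩
  -- uniqueness
  intro Y hY1 hY2 hfixY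
  have hYs : Y ∈ s := ⟨⟨hY1.1.le, hY1.2⟩, ⟨hY2.1.le, hY2.2⟩⟩
  have hys' : y ∈ s := ⟨hy1, hy2⟩
  have hd := hlip.dist_le_mul Y hYs y hys'
  rw [hfixY, hfix', hKcoe] at hd
  rcases eq_or_lt_of_le (dist_nonneg (x := Y) (y := y)) with h | h
  · exact eq_of_dist_eq_zero h.symm
  · exfalso
    have h2 := mul_lt_mul_of_pos_right hKrlt h
    rw [one_mul] at h2
    linarith
end

section
/- Let T be the final-size map built from positive parameters βᵢⱼ, γᵢ, μᵢ and initial data S₁₀, S₂₀ > 0, I₁₀, I₂₀ ≥ 0, R₁₀, R₂₀ ≥ 0, and assume hypothesis H2d: Λ := max over i ∈ {1,2} of (βᵢ₁ S₁₀/((γ₁+μ₁)Z₁) + βᵢ₂ S₂₀/((γ₂+μ₂)Z₂)) < 1. Define Ω = (−∞, log S₁₀] × (−∞, log S₂₀] and G : Ω → ℝ² by Gᵢ(u₁,u₂) = log Tᵢ(e^{u₁}, e^{u₂}). Then G maps Ω into Ω and is a Λ-contraction in the supremum norm: for all U, V ∈ Ω, max_i |Gᵢ(U) − Gᵢ(V)|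 ≤ Λ · max_j |uⱼ − vⱼ|. -/
open Filter

noncomputable def Gmap (T : ℝ × ℝ → ℝ × ℝ) : ℝ × ℝ → ℝ × ℝ := fun u =>
  (Real.log (T (Real.exp u.1, Real.exp u.2)).1, Real.log (T (Real.exp u.1, Real.exp u.2)).2)

lemma aux_lip (ε Z S a b : ℝ) (hε : 0 < ε) (hZ : 0 < Z) (hS : 0 < S)
    (ha : a ≤ Real.log S) (hb : b ≤ Real.log S) :
    |Real.log (ε * Real.exp a + Z) - Real.log (ε * Real.exp b + Z)|
      ≤ ε * S / Z * |a - b| := by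
  wlog hab : b ≤ a with H
  · have h := H ε Z S b a hε hZ hS hb ha (le_of_not_ge hab)
    rwa [abs_sub_comm, abs_sub_comm b a] at h
  have hea : Real.exp a ≤ S := by
    rw [← Real.exp_log hS]; exact Real.exp_le_exp.mpr ha
  have heb : Real.exp b ≤ Real.exp a := Real.exp_le_exp.mpr hab
  have hX : (0:ℝ) < ε * Real.exp a + Z := by positivity
  have hY : (0:ℝ) < ε * Real.exp b + Z := by positivity
  have hXY : ε * Real.exp b + Z ≤ ε * Real.exp a + Z := by nlinarith
  have hkey : Real.exp a - Real.exp b ≤ S * (a - b) := by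
    have h := Real.add_one_le_exp (b - a)
    have h2 : Real.exp a * ((b - a) + 1) ≤ Real.exp b := by
      calc Real.exp a * ((b - a) + 1) ≤ Real.exp a * Real.exp (b - a) := by
            exact mul_le_mul_of_nonneg_left h (Real.exp_pos a).le
        _ = Real.exp b := by rw [← Real.exp_add]; ring_nf
    have h3 : Real.exp a * (a - b) ≤ S * (a - b) :=
      mul_le_mul_of_nonneg_right hea (by linarith)
    nlinarith
  rw [abs_of_nonneg (sub_nonneg.mpr (Real.log_le_log hY hXY)),
      abs_of_nonneg (sub_nonneg.mpr hab)]
  calc Real.log (ε * Real.exp a + Z) - Real.log (ε * Real.exp b + Z)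
      = Real.log ((ε * Real.exp a + Z) / (ε * Real.exp b + Z)) :=
        (Real.log_div hX.ne' hY.ne').symm
    _ ≤ (ε * Real.exp a + Z) / (ε * Real.exp b + Z) - 1 :=
        Real.log_le_sub_one_of_pos (div_pos hX hY)
    _ = ε * (Real.exp a - Real.exp b) / (ε * Real.exp b + Z) := by
        field_simp
        ring
    _ ≤ ε * (Real.exp a - Real.exp b) / Z := by
        gcongr
        · nlinarith [mul_pos hε (Real.exp_pos b)]
    _ ≤ ε * (S * (a - b)) / Z := by gcongr
    _ = ε * S / Z * (a - b) := by ring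

lemma log_form (S A B p q : ℝ) (hS : 0 < S) (hA : 0 < A) (hB : 0 < B) :
    Real.log (S * A ^ p * B ^ q) = Real.log S + p * Real.log A + q * Real.log B := by
  rw [Real.log_mul (by positivity) (by positivity),
      Real.log_mul hS.ne' (by positivity),
      Real.log_rpow hA, Real.log_rpow hB]

lemma comp_contr (p1 p2 ε1 Z1 S1 ε2 Z2 S2 a1 a2 b1 b2 : ℝ)
    (hp1 : 0 ≤ p1) (hp2 : 0 ≤ p2) (hε1 : 0 < ε1) (hZ1 : 0 < Z1) (hS1 : 0 < S1)
    (hε2 : 0 < ε2) (hZ2 : 0 < Z2) (hS2 : 0 < S2)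
    (ha1 : a1 ≤ Real.log S1) (hb1 : b1 ≤ Real.log S1)
    (ha2 : a2 ≤ Real.log S2) (hb2 : b2 ≤ Real.log S2) :
    |p1 * (Real.log (ε1 * Real.exp a1 + Z1) - Real.log (ε1 * Real.exp b1 + Z1))
      + p2 * (Real.log (ε2 * Real.exp a2 + Z2) - Real.log (ε2 * Real.exp b2 + Z2))|
    ≤ (p1 * (ε1 * S1 / Z1) + p2 * (ε2 * S2 / Z2)) * max |a1 - b1| |a2 - b2| := by
  have hM1 : |a1 - b1| ≤ max |a1 - b1| |a2 - b2| := le_max_left _ _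
  have hM2 : |a2 - b2| ≤ max |a1 - b1| |a2 - b2| := le_max_right _ _
  calc |p1 * (Real.log (ε1 * Real.exp a1 + Z1) - Real.log (ε1 * Real.exp b1 + Z1))
      + p2 * (Real.log (ε2 * Real.exp a2 + Z2) - Real.log (ε2 * Real.exp b2 + Z2))|
      ≤ |p1 * (Real.log (ε1 * Real.exp a1 + Z1) - Real.log (ε1 * Real.exp b1 + Z1))|
        + |p2 * (Real.log (ε2 * Real.exp a2 + Z2) - Real.log (ε2 * Real.exp b2 + Z2))| :=
        abs_add_le _ _
    _ = p1 * |Real.log (ε1 * Real.exp a1 + Z1) - Real.log (ε1 * Real.exp b1 + Z1)|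
        + p2 * |Real.log (ε2 * Real.exp a2 + Z2) - Real.log (ε2 * Real.exp b2 + Z2)| := by
        rw [abs_mul, abs_mul, abs_of_nonneg hp1, abs_of_nonneg hp2]
    _ ≤ p1 * (ε1 * S1 / Z1 * |a1 - b1|) + p2 * (ε2 * S2 / Z2 * |a2 - b2|) := by
        gcongr
        · exact aux_lip ε1 Z1 S1 a1 b1 hε1 hZ1 hS1 ha1 hb1
        · exact aux_lip ε2 Z2 S2 a2 b2 hε2 hZ2 hS2 ha2 hb2
    _ ≤ p1 * (ε1 * S1 / Z1 * max |a1 - b1| |a2 - b2|)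
        + p2 * (ε2 * S2 / Z2 * max |a1 - b1| |a2 - b2|) := by
        have c1 : (0:ℝ) ≤ ε1 * S1 / Z1 := by positivity
        have c2 : (0:ℝ) ≤ ε2 * S2 / Z2 := by positivity
        gcongr
    _ = (p1 * (ε1 * S1 / Z1) + p2 * (ε2 * S2 / Z2)) * max |a1 - b1| |a2 - b2| := by ring

set_option maxHeartbeats 1000000 in
theorem stmt_16
    (β11 β12 β21 β22 γ1 γ2 μ1 μ2 : ℝ)
    (hβ11 : 0 < β11) (hβ12 : 0 < β12) (hβ21 : 0 < β21) (hβ22 : 0 < β22)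
    (hγ1 : 0 < γ1) (hγ2 : 0 < γ2) (hμ1 : 0 < μ1) (hμ2 : 0 < μ2)
    (S10 S20 I10 I20 R10 R20 : ℝ)
    (hS10 : 0 < S10) (hS20 : 0 < S20)
    (hI10 : 0 ≤ I10) (hI20 : 0 ≤ I20)
    (hR10 : 0 ≤ R10) (hR20 : 0 ≤ R20)
    (ε1 ε2 Z1 Z2 N10 N20 : ℝ)
    (hN10 : N10 = S10 + I10 + R10) (hN20 : N20 = S20 + I20 + R20)
    (hε1 : ε1 = μ1 / (γ1 + μ1)) (hε2 : ε2 = μ2 / (γ2 + μ2))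
    (hZ1 : Z1 = (1 - ε1) * N10 + ε1 * R10) (hZ2 : Z2 = (1 - ε2) * N20 + ε2 * R20)
    (Λ : ℝ)
    (hΛ : Λ = max (β11 * S10 / ((γ1 + μ1) * Z1) + β12 * S20 / ((γ2 + μ2) * Z2))
                  (β21 * S10 / ((γ1 + μ1) * Z1) + β22 * S20 / ((γ2 + μ2) * Z2)))
    (hΛ1 : Λ < 1)
    (T : ℝ × ℝ → ℝ × ℝ)
    (hT : T = Tmap β11 β12 β21 β22 μ1 μ2 S10 S20 ε1 ε2 Z1 Z2 N10 N20)
    :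
    (∀ u : ℝ × ℝ, u.1 ≤ Real.log S10 → u.2 ≤ Real.log S20 →
      (Gmap T u).1 ≤ Real.log S10 ∧ (Gmap T u).2 ≤ Real.log S20) ∧
    (∀ u v : ℝ × ℝ, u.1 ≤ Real.log S10 → u.2 ≤ Real.log S20 →
      v.1 ≤ Real.log S10 → v.2 ≤ Real.log S20 →
      max |(Gmap T u).1 - (Gmap T v).1| |(Gmap T u).2 - (Gmap T v).2|
        ≤ Λ * max |u.1 - v.1| |u.2 - v.2|) := by
  subst hT
  have hγμ1 : (0:ℝ) < γ1 + μ1 := by linarith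
  have hγμ2 : (0:ℝ) < γ2 + μ2 := by linarith
  have hε1p : 0 < ε1 := by rw [hε1]; positivity
  have hε2p : 0 < ε2 := by rw [hε2]; positivity
  have hε1lt : ε1 < 1 := by rw [hε1, div_lt_one hγμ1]; linarith
  have hε2lt : ε2 < 1 := by rw [hε2, div_lt_one hγμ2]; linarith
  have hN1p : 0 < N10 := by rw [hN10]; linarith
  have hN2p : 0 < N20 := by rw [hN20]; linarith
  have hZ1p : 0 < Z1 := by
    rw [hZ1]
    nlinarith [mul_pos (by linarith : (0:ℝ) < 1 - ε1) hN1p, mul_nonneg hε1p.le hR10]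
  have hZ2p : 0 < Z2 := by
    rw [hZ2]
    nlinarith [mul_pos (by linarith : (0:ℝ) < 1 - ε2) hN2p, mul_nonneg hε2p.le hR20]
  have hbound1 : ∀ a : ℝ, a ≤ Real.log S10 → ε1 * Real.exp a + Z1 ≤ N10 := by
    intro a ha
    have hea : Real.exp a ≤ S10 := by
      rw [← Real.exp_log hS10]; exact Real.exp_le_exp.mpr ha
    have h1 : ε1 * Real.exp a ≤ ε1 * S10 := mul_le_mul_of_nonneg_left hea hε1p.le
    rw [hZ1, hN10]
    nlinarith [mul_nonneg hε1p.le hI10]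
  have hbound2 : ∀ a : ℝ, a ≤ Real.log S20 → ε2 * Real.exp a + Z2 ≤ N20 := by
    intro a ha
    have hea : Real.exp a ≤ S20 := by
      rw [← Real.exp_log hS20]; exact Real.exp_le_exp.mpr ha
    have h1 : ε2 * Real.exp a ≤ ε2 * S20 := mul_le_mul_of_nonneg_left hea hε2p.le
    rw [hZ2, hN20]
    nlinarith [mul_nonneg hε2p.le hI20]
  have hx1 : ∀ a : ℝ, 0 < ε1 * Real.exp a + Z1 := fun a => by positivity
  have hx2 : ∀ a : ℝ, 0 < ε2 * Real.exp a + Z2 := fun a => by positivity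
  set Tm := Tmap β11 β12 β21 β22 μ1 μ2 S10 S20 ε1 ε2 Z1 Z2 N10 N20 with hTm
  have hG1 : ∀ u : ℝ × ℝ, (Gmap Tm u).1
      = Real.log S10 + (β11 / μ1) * (Real.log (ε1 * Real.exp u.1 + Z1) - Real.log N10)
        + (β12 / μ2) * (Real.log (ε2 * Real.exp u.2 + Z2) - Real.log N20) := by
    intro u
    show Real.log (S10 * ((ε1 * Real.exp u.1 + Z1) / N10) ^ (β11 / μ1)
        * ((ε2 * Real.exp u.2 + Z2) / N20) ^ (β12 / μ2)) = _
    rw [log_form _ _ _ _ _ hS10 (by positivity) (by positivity),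
        Real.log_div (hx1 u.1).ne' hN1p.ne', Real.log_div (hx2 u.2).ne' hN2p.ne']
  have hG2 : ∀ u : ℝ × ℝ, (Gmap Tm u).2
      = Real.log S20 + (β21 / μ1) * (Real.log (ε1 * Real.exp u.1 + Z1) - Real.log N10)
        + (β22 / μ2) * (Real.log (ε2 * Real.exp u.2 + Z2) - Real.log N20) := by
    intro u
    show Real.log (S20 * ((ε1 * Real.exp u.1 + Z1) / N10) ^ (β21 / μ1)
        * ((ε2 * Real.exp u.2 + Z2) / N20) ^ (β22 / μ2)) = _
    rw [log_form _ _ _ _ _ hS20 (by positivity) (by positivity),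
        Real.log_div (hx1 u.1).ne' hN1p.ne', Real.log_div (hx2 u.2).ne' hN2p.ne']
  constructor
  · intro u hu1 hu2
    have hl1 : Real.log (ε1 * Real.exp u.1 + Z1) - Real.log N10 ≤ 0 :=
      sub_nonpos.mpr (Real.log_le_log (hx1 u.1) (hbound1 u.1 hu1))
    have hl2 : Real.log (ε2 * Real.exp u.2 + Z2) - Real.log N20 ≤ 0 :=
      sub_nonpos.mpr (Real.log_le_log (hx2 u.2) (hbound2 u.2 hu2))
    have hp11 : (0:ℝ) ≤ β11 / μ1 := by positivity
    have hp12 : (0:ℝ) ≤ β12 / μ2 := by positivity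
    have hp21 : (0:ℝ) ≤ β21 / μ1 := by positivity
    have hp22 : (0:ℝ) ≤ β22 / μ2 := by positivity
    constructor
    · rw [hG1 u]
      linarith [mul_nonpos_of_nonneg_of_nonpos hp11 hl1,
        mul_nonpos_of_nonneg_of_nonpos hp12 hl2]
    · rw [hG2 u]
      linarith [mul_nonpos_of_nonneg_of_nonpos hp21 hl1,
        mul_nonpos_of_nonneg_of_nonpos hp22 hl2]
  · intro u v hu1 hu2 hv1 hv2
    have hc11 : (β11 / μ1) * (ε1 * S10 / Z1) = β11 * S10 / ((γ1 + μ1) * Z1) := by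
      rw [hε1]; field_simp
    have hc12 : (β12 / μ2) * (ε2 * S20 / Z2) = β12 * S20 / ((γ2 + μ2) * Z2) := by
      rw [hε2]; field_simp
    have hc21 : (β21 / μ1) * (ε1 * S10 / Z1) = β21 * S10 / ((γ1 + μ1) * Z1) := by
      rw [hε1]; field_simp
    have hc22 : (β22 / μ2) * (ε2 * S20 / Z2) = β22 * S20 / ((γ2 + μ2) * Z2) := by
      rw [hε2]; field_simp
    have hMnn : (0:ℝ) ≤ max |u.1 - v.1| |u.2 - v.2| :=
      le_trans (abs_nonneg _) (le_max_left _ _)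
    have key1 : |(Gmap Tm u).1 - (Gmap Tm v).1| ≤ Λ * max |u.1 - v.1| |u.2 - v.2| := by
      have e1 : (Gmap Tm u).1 - (Gmap Tm v).1
          = (β11 / μ1) * (Real.log (ε1 * Real.exp u.1 + Z1) - Real.log (ε1 * Real.exp v.1 + Z1))
            + (β12 / μ2) * (Real.log (ε2 * Real.exp u.2 + Z2) - Real.log (ε2 * Real.exp v.2 + Z2)) := by
        rw [hG1 u, hG1 v]; ring
      rw [e1]
      calc _ ≤ ((β11 / μ1) * (ε1 * S10 / Z1) + (β12 / μ2) * (ε2 * S20 / Z2))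
              * max |u.1 - v.1| |u.2 - v.2| :=
            comp_contr _ _ _ _ _ _ _ _ _ _ _ _ (by positivity) (by positivity)
              hε1p hZ1p hS10 hε2p hZ2p hS20 hu1 hv1 hu2 hv2
        _ ≤ Λ * max |u.1 - v.1| |u.2 - v.2| := by
            apply mul_le_mul_of_nonneg_right _ hMnn
            rw [hc11, hc12, hΛ]
            exact le_max_left _ _
    have key2 : |(Gmap Tm u).2 - (Gmap Tm v).2| ≤ Λ * max |u.1 - v.1| |u.2 - v.2| := by
      have e2 : (Gmap Tm u).2 - (Gmap Tm v).2
          = (β21 / μ1) * (Real.log (ε1 * Real.exp u.1 + Z1) - Real.log (ε1 * Real.exp v.1 + Z1))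
            + (β22 / μ2) * (Real.log (ε2 * Real.exp u.2 + Z2) - Real.log (ε2 * Real.exp v.2 + Z2)) := by
        rw [hG2 u, hG2 v]; ring
      rw [e2]
      calc _ ≤ ((β21 / μ1) * (ε1 * S10 / Z1) + (β22 / μ2) * (ε2 * S20 / Z2))
              * max |u.1 - v.1| |u.2 - v.2| :=
            comp_contr _ _ _ _ _ _ _ _ _ _ _ _ (by positivity) (by positivity)
              hε1p hZ1p hS10 hε2p hZ2p hS20 hu1 hv1 hu2 hv2
        _ ≤ Λ * max |u.1 - v.1| |u.2 - v.2| := by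
            apply mul_le_mul_of_nonneg_right _ hMnn
            rw [hc21, hc22, hΛ]
            exact le_max_right _ _
    exact max_le key1 key2
end

section
/- Let T be the final-size map built from positive parameters βᵢⱼ, γᵢ, μᵢ and initial data S₁₀, S₂₀ > 0, I₁₀, I₂₀ ≥ 0, R₁₀, R₂₀ ≥ 0 with I₁₀ + I₂₀ > 0, and assume hypothesis H2d: max over i ∈ {1,2} of (βᵢ₁ S₁₀/((γ₁+μ₁)Z₁) + βᵢ₂ S₂₀/((γ₂+μ₂)Z₂)) < 1. Then T has exactly one fixed point S* in (0,S₁₀]×(0,S₂₀], this fixed point satisfies 0 < Sᵢ* < Sᵢ₀ for i = 1,2, and S* = lim_{n→∞} Tⁿ(0,0). -/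
open Filter Set

lemma rpow_lipschitz_aux {m p u v : ℝ} (hm : 0 < m) (hp : 0 < p)
    (hu : u ∈ Set.Icc m 1) (hv : v ∈ Set.Icc m 1) :
    |u ^ p - v ^ p| ≤ p / m * |u - v| := by
  have h := Convex.norm_image_sub_le_of_norm_hasDerivWithin_le
    (f := fun t : ℝ => t ^ p) (f' := fun t : ℝ => p * t ^ (p - 1)) (s := Set.Icc m 1)
    (C := p / m)
    (fun t ht => (Real.hasDerivAt_rpow_const
      (Or.inl (ne_of_gt (lt_of_lt_of_le hm ht.1)))).hasDerivWithinAt)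
    (fun t ht => by
      have ht0 : 0 < t := lt_of_lt_of_le hm ht.1
      have h1 : t ^ (p - 1) = t ^ p / t := by
        rw [Real.rpow_sub ht0, Real.rpow_one]
      have h2 : t ^ p ≤ 1 := Real.rpow_le_one ht0.le ht.2 hp.le
      have h3 : t ^ (p - 1) ≤ 1 / m := by
        rw [h1]; exact div_le_div₀ zero_le_one h2 hm ht.1
      have h4 : (0:ℝ) ≤ t ^ (p - 1) := Real.rpow_nonneg ht0.le _
      rw [Real.norm_eq_abs, abs_mul, abs_of_pos hp, abs_of_nonneg h4]
      calc p * t ^ (p-1) ≤ p * (1/m) := by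
            exact mul_le_mul_of_nonneg_left h3 hp.le
        _ = p / m := by ring)
    (convex_Icc m 1) hv hu
  simpa [Real.norm_eq_abs, abs_sub_comm] using h

lemma prod_rpow_diff_le {m1 m2 p q a a' b b' : ℝ} (hm1 : 0 < m1) (hm2 : 0 < m2)
    (hp : 0 < p) (hq : 0 < q)
    (ha : a ∈ Set.Icc m1 1) (ha' : a' ∈ Set.Icc m1 1)
    (hb : b ∈ Set.Icc m2 1) (hb' : b' ∈ Set.Icc m2 1) :
    |a ^ p * b ^ q - a' ^ p * b' ^ q| ≤ p / m1 * |a - a'| + q / m2 * |b - b'| := by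
  have h1 := rpow_lipschitz_aux hm1 hp ha ha'
  have h2 := rpow_lipschitz_aux hm2 hq hb hb'
  have hap : a ^ p ≤ 1 := Real.rpow_le_one (hm1.le.trans ha.1) ha.2 hp.le
  have hbq : b' ^ q ≤ 1 := Real.rpow_le_one (hm2.le.trans hb'.1) hb'.2 hq.le
  have hap0 : (0:ℝ) ≤ a ^ p := Real.rpow_nonneg (hm1.le.trans ha.1) _
  have hbq0 : (0:ℝ) ≤ b' ^ q := Real.rpow_nonneg (hm2.le.trans hb'.1) _
  calc |a ^ p * b ^ q - a' ^ p * b' ^ q|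
      = |a ^ p * (b ^ q - b' ^ q) + b' ^ q * (a ^ p - a' ^ p)| := by ring_nf
    _ ≤ |a ^ p * (b ^ q - b' ^ q)| + |b' ^ q * (a ^ p - a' ^ p)| := abs_add_le _ _
    _ = |a ^ p| * |b ^ q - b' ^ q| + |b' ^ q| * |a ^ p - a' ^ p| := by
        rw [abs_mul, abs_mul]
    _ ≤ 1 * |b ^ q - b' ^ q| + 1 * |a ^ p - a' ^ p| := by
        gcongr
        · rwa [abs_of_nonneg hap0]
        · rwa [abs_of_nonneg hbq0]
    _ ≤ p / m1 * |a - a'| + q / m2 * |b - b'| := by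
        rw [one_mul, one_mul]; linarith

set_option maxHeartbeats 2000000 in
theorem stmt_17
    (β11 β12 β21 β22 γ1 γ2 μ1 μ2 : ℝ)
    (hβ11 : 0 < β11) (hβ12 : 0 < β12) (hβ21 : 0 < β21) (hβ22 : 0 < β22)
    (hγ1 : 0 < γ1) (hγ2 : 0 < γ2) (hμ1 : 0 < μ1) (hμ2 : 0 < μ2)
    (S10 S20 I10 I20 R10 R20 : ℝ)
    (hS10 : 0 < S10) (hS20 : 0 < S20)
    (hI10 : 0 ≤ I10) (hI20 : 0 ≤ I20)
    (hR10 : 0 ≤ R10) (hR20 : 0 ≤ R20)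
    (ε1 ε2 Z1 Z2 N10 N20 : ℝ)
    (hN10 : N10 = S10 + I10 + R10) (hN20 : N20 = S20 + I20 + R20)
    (hε1 : ε1 = μ1 / (γ1 + μ1)) (hε2 : ε2 = μ2 / (γ2 + μ2))
    (hZ1 : Z1 = (1 - ε1) * N10 + ε1 * R10) (hZ2 : Z2 = (1 - ε2) * N20 + ε2 * R20)
    (hI0 : 0 < I10 + I20)
    (Λ : ℝ)
    (hΛ : Λ = max (β11 * S10 / ((γ1 + μ1) * Z1) + β12 * S20 / ((γ2 + μ2) * Z2))
                  (β21 * S10 / ((γ1 + μ1) * Z1) + β22 * S20 / ((γ2 + μ2) * Z2)))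
    (hΛ1 : Λ < 1)
    (T : ℝ × ℝ → ℝ × ℝ)
    (hT : T = Tmap β11 β12 β21 β22 μ1 μ2 S10 S20 ε1 ε2 Z1 Z2 N10 N20)
    :
    ∃ Sstar : ℝ × ℝ,
      (T Sstar = Sstar ∧
       (0 < Sstar.1 ∧ Sstar.1 < S10) ∧ (0 < Sstar.2 ∧ Sstar.2 < S20) ∧
       Tendsto (fun n => T^[n] (0, 0)) atTop (nhds Sstar)) ∧
      ∀ Y : ℝ × ℝ, Y.1 ∈ Set.Ioc (0:ℝ) S10 → Y.2 ∈ Set.Ioc (0:ℝ) S20 → T Y = Y → Y = Sstar := by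
  -- basic positivity facts
  have hγμ1 : 0 < γ1 + μ1 := by linarith
  have hγμ2 : 0 < γ2 + μ2 := by linarith
  have hε1pos : 0 < ε1 := by rw [hε1]; positivity
  have hε2pos : 0 < ε2 := by rw [hε2]; positivity
  have hε1lt : ε1 < 1 := by rw [hε1, div_lt_one hγμ1]; linarith
  have hε2lt : ε2 < 1 := by rw [hε2, div_lt_one hγμ2]; linarith
  have hN1pos : 0 < N10 := by rw [hN10]; linarith
  have hN2pos : 0 < N20 := by rw [hN20]; linarith
  have hZ1pos : 0 < Z1 := by
    rw [hZ1]
    have := mul_pos (sub_pos.2 hε1lt) hN1pos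
    nlinarith [mul_nonneg hε1pos.le hR10]
  have hZ2pos : 0 < Z2 := by
    rw [hZ2]
    have := mul_pos (sub_pos.2 hε2lt) hN2pos
    nlinarith [mul_nonneg hε2pos.le hR20]
  have hkey1 : ε1 * S10 + Z1 = N10 - ε1 * I10 := by rw [hZ1]; rw [hN10]; ring
  have hkey2 : ε2 * S20 + Z2 = N20 - ε2 * I20 := by rw [hZ2]; rw [hN20]; ring
  -- bases bounds
  set m1 : ℝ := Z1 / N10 with hm1def
  set m2 : ℝ := Z2 / N20 with hm2def
  have hm1pos : 0 < m1 := div_pos hZ1pos hN1pos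
  have hm2pos : 0 < m2 := div_pos hZ2pos hN2pos
  have hbase1 : ∀ t : ℝ, 0 ≤ t → t ≤ 1 → (ε1 * S10 * t + Z1) / N10 ∈ Set.Icc m1 1 := by
    intro t h0 h1
    constructor
    · rw [hm1def]
      gcongr
      linarith [mul_nonneg (mul_nonneg hε1pos.le hS10.le) h0]
    · rw [div_le_one hN1pos]
      have e : 0 ≤ ε1 * S10 * (1 - t) :=
        mul_nonneg (mul_nonneg hε1pos.le hS10.le) (by linarith)
      have e2 : 0 ≤ ε1 * I10 := mul_nonneg hε1pos.le hI10
      have e' : ε1 * S10 * t + Z1 = N10 - ε1 * I10 - ε1 * S10 * (1 - t) := by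
        linear_combination hkey1
      linarith [e, e2, e']
  have hbase2 : ∀ t : ℝ, 0 ≤ t → t ≤ 1 → (ε2 * S20 * t + Z2) / N20 ∈ Set.Icc m2 1 := by
    intro t h0 h1
    constructor
    · rw [hm2def]
      gcongr
      linarith [mul_nonneg (mul_nonneg hε2pos.le hS20.le) h0]
    · rw [div_le_one hN2pos]
      have e : 0 ≤ ε2 * S20 * (1 - t) :=
        mul_nonneg (mul_nonneg hε2pos.le hS20.le) (by linarith)
      have e2 : 0 ≤ ε2 * I20 := mul_nonneg hε2pos.le hI20
      have e' : ε2 * S20 * t + Z2 = N20 - ε2 * I20 - ε2 * S20 * (1 - t) := by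
        linear_combination hkey2
      linarith [e, e2, e']
  -- exponents and coefficients
  have hp1 : 0 < β11 / μ1 := by positivity
  have hq1 : 0 < β12 / μ2 := by positivity
  have hp2 : 0 < β21 / μ1 := by positivity
  have hq2 : 0 < β22 / μ2 := by positivity
  set A11 : ℝ := β11 * S10 / ((γ1 + μ1) * Z1) with hA11def
  set A12 : ℝ := β12 * S20 / ((γ2 + μ2) * Z2) with hA12def
  set A21 : ℝ := β21 * S10 / ((γ1 + μ1) * Z1) with hA21def
  set A22 : ℝ := β22 * S20 / ((γ2 + μ2) * Z2) with hA22def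
  have hA11pos : 0 < A11 := by rw [hA11def]; positivity
  have hA12pos : 0 < A12 := by rw [hA12def]; positivity
  have hA21pos : 0 < A21 := by rw [hA21def]; positivity
  have hA22pos : 0 < A22 := by rw [hA22def]; positivity
  have hC11 : β11 / μ1 / m1 * (ε1 * S10 / N10) = A11 := by
    rw [hm1def, hε1, hA11def]; field_simp
  have hC12 : β12 / μ2 / m2 * (ε2 * S20 / N20) = A12 := by
    rw [hm2def, hε2, hA12def]; field_simp
  have hC21 : β21 / μ1 / m1 * (ε1 * S10 / N10) = A21 := by
    rw [hm1def, hε1, hA21def]; field_simp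
  have hC22 : β22 / μ2 / m2 * (ε2 * S20 / N20) = A22 := by
    rw [hm2def, hε2, hA22def]; field_simp
  have hrow1 : A11 + A12 ≤ Λ := by rw [hΛ, hA11def, hA12def]; exact le_max_left _ _
  have hrow2 : A21 + A22 ≤ Λ := by rw [hΛ, hA21def, hA22def]; exact le_max_right _ _
  have hΛpos : 0 < Λ := lt_of_lt_of_le (by linarith) hrow1
  -- the rescaled map
  set U : ℝ × ℝ → ℝ × ℝ := fun y =>
    (((ε1 * S10 * y.1 + Z1) / N10) ^ (β11 / μ1) * ((ε2 * S20 * y.2 + Z2) / N20) ^ (β12 / μ2),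
     ((ε1 * S10 * y.1 + Z1) / N10) ^ (β21 / μ1) * ((ε2 * S20 * y.2 + Z2) / N20) ^ (β22 / μ2))
    with hUdef
  set K' : Set (ℝ × ℝ) := Set.Icc (0, 0) (1, 1) with hK'def
  have hKmem : ∀ y : ℝ × ℝ, y ∈ K' ↔ (0 ≤ y.1 ∧ y.1 ≤ 1) ∧ (0 ≤ y.2 ∧ y.2 ≤ 1) := by
    intro y
    rw [hK'def, Set.mem_Icc, Prod.le_def, Prod.le_def]
    tauto
  -- U maps K' into itself, with positive components
  have hmapsto : ∀ y ∈ K', U y ∈ K' ∧ 0 < (U y).1 ∧ 0 < (U y).2 := by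
    intro y hy
    rw [hKmem] at hy
    have b1 := hbase1 y.1 hy.1.1 hy.1.2
    have b2 := hbase2 y.2 hy.2.1 hy.2.2
    have a0 : 0 < (ε1 * S10 * y.1 + Z1) / N10 := lt_of_lt_of_le hm1pos b1.1
    have b0 : 0 < (ε2 * S20 * y.2 + Z2) / N20 := lt_of_lt_of_le hm2pos b2.1
    have f1 : ∀ p : ℝ, 0 < p → 0 < ((ε1 * S10 * y.1 + Z1) / N10) ^ p ∧
        ((ε1 * S10 * y.1 + Z1) / N10) ^ p ≤ 1 := fun p hp =>
      ⟨Real.rpow_pos_of_pos a0 p, Real.rpow_le_one a0.le b1.2 hp.le⟩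
    have f2 : ∀ p : ℝ, 0 < p → 0 < ((ε2 * S20 * y.2 + Z2) / N20) ^ p ∧
        ((ε2 * S20 * y.2 + Z2) / N20) ^ p ≤ 1 := fun p hp =>
      ⟨Real.rpow_pos_of_pos b0 p, Real.rpow_le_one b0.le b2.2 hp.le⟩
    obtain ⟨g1, g1'⟩ := f1 _ hp1
    obtain ⟨g2, g2'⟩ := f2 _ hq1
    obtain ⟨g3, g3'⟩ := f1 _ hp2
    obtain ⟨g4, g4'⟩ := f2 _ hq2
    refine ⟨(hKmem _).2 ⟨⟨?_, ?_⟩, ⟨?_, ?_⟩⟩, ?_, ?_⟩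
    · exact (mul_pos g1 g2).le
    · exact mul_le_one₀ g1' g2.le g2'
    · exact (mul_pos g3 g4).le
    · exact mul_le_one₀ g3' g4.le g4'
    · exact mul_pos g1 g2
    · exact mul_pos g3 g4
  -- Lipschitz estimate for each component
  have hUbound : ∀ (p q A B : ℝ), 0 < p → 0 < q →
      p / m1 * (ε1 * S10 / N10) = A → q / m2 * (ε2 * S20 / N20) = B →
      ∀ y y' : ℝ × ℝ, y ∈ K' → y' ∈ K' →
      |((ε1 * S10 * y.1 + Z1) / N10) ^ p * ((ε2 * S20 * y.2 + Z2) / N20) ^ q -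
       ((ε1 * S10 * y'.1 + Z1) / N10) ^ p * ((ε2 * S20 * y'.2 + Z2) / N20) ^ q|
        ≤ A * |y.1 - y'.1| + B * |y.2 - y'.2| := by
    intro p q A B hp hq hA hB y y' hy hy'
    rw [hKmem] at hy hy'
    have h := prod_rpow_diff_le hm1pos hm2pos hp hq
      (hbase1 y.1 hy.1.1 hy.1.2) (hbase1 y'.1 hy'.1.1 hy'.1.2)
      (hbase2 y.2 hy.2.1 hy.2.2) (hbase2 y'.2 hy'.2.1 hy'.2.2)
    have ha : (ε1 * S10 * y.1 + Z1) / N10 - (ε1 * S10 * y'.1 + Z1) / N10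
        = ε1 * S10 / N10 * (y.1 - y'.1) := by field_simp; ring
    have hb : (ε2 * S20 * y.2 + Z2) / N20 - (ε2 * S20 * y'.2 + Z2) / N20
        = ε2 * S20 / N20 * (y.2 - y'.2) := by field_simp; ring
    have hpos1 : (0:ℝ) ≤ ε1 * S10 / N10 := by positivity
    have hpos2 : (0:ℝ) ≤ ε2 * S20 / N20 := by positivity
    calc |((ε1 * S10 * y.1 + Z1) / N10) ^ p * ((ε2 * S20 * y.2 + Z2) / N20) ^ q -
       ((ε1 * S10 * y'.1 + Z1) / N10) ^ p * ((ε2 * S20 * y'.2 + Z2) / N20) ^ q|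
        ≤ p / m1 * |(ε1 * S10 * y.1 + Z1) / N10 - (ε1 * S10 * y'.1 + Z1) / N10|
          + q / m2 * |(ε2 * S20 * y.2 + Z2) / N20 - (ε2 * S20 * y'.2 + Z2) / N20| := h
      _ = A * |y.1 - y'.1| + B * |y.2 - y'.2| := by
          rw [ha, hb, abs_mul, abs_mul, abs_of_nonneg hpos1, abs_of_nonneg hpos2,
            ← hA, ← hB]
          ring
  -- distance contraction
  have hUdist : ∀ y y' : ℝ × ℝ, y ∈ K' → y' ∈ K' →
      dist (U y) (U y') ≤ Λ * dist y y' := by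
    intro y y' hy hy'
    have hD1 : |y.1 - y'.1| ≤ dist y y' := by
      rw [Prod.dist_eq, ← Real.dist_eq]; exact le_max_left _ _
    have hD2 : |y.2 - y'.2| ≤ dist y y' := by
      rw [Prod.dist_eq, ← Real.dist_eq]; exact le_max_right _ _
    have hDn : 0 ≤ dist y y' := dist_nonneg
    rw [Prod.dist_eq]
    have e1 := hUbound _ _ _ _ hp1 hq1 hC11 hC12 y y' hy hy'
    have e2 := hUbound _ _ _ _ hp2 hq2 hC21 hC22 y y' hy hy'
    apply max_le
    · rw [Real.dist_eq]
      calc |(U y).1 - (U y').1| ≤ A11 * |y.1 - y'.1| + A12 * |y.2 - y'.2| := e1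
        _ ≤ A11 * dist y y' + A12 * dist y y' := by
            gcongr
        _ = (A11 + A12) * dist y y' := by ring
        _ ≤ Λ * dist y y' := mul_le_mul_of_nonneg_right hrow1 hDn
    · rw [Real.dist_eq]
      calc |(U y).2 - (U y').2| ≤ A21 * |y.1 - y'.1| + A22 * |y.2 - y'.2| := e2
        _ ≤ A21 * dist y y' + A22 * dist y y' := by
            gcongr
        _ = (A21 + A22) * dist y y' := by ring
        _ ≤ Λ * dist y y' := mul_le_mul_of_nonneg_right hrow2 hDn
  -- strict upper bound for components of U
  have hIor : 0 < I10 ∨ 0 < I20 := by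
    rcases hI10.lt_or_eq with h | h
    · exact Or.inl h
    · right; linarith
  have hUlt : ∀ y ∈ K', (U y).1 < 1 ∧ (U y).2 < 1 := by
    intro y hy
    rw [hKmem] at hy
    have b1 := hbase1 y.1 hy.1.1 hy.1.2
    have b2 := hbase2 y.2 hy.2.1 hy.2.2
    have a0 : 0 < (ε1 * S10 * y.1 + Z1) / N10 := lt_of_lt_of_le hm1pos b1.1
    have b0 : 0 < (ε2 * S20 * y.2 + Z2) / N20 := lt_of_lt_of_le hm2pos b2.1
    simp only [hUdef]
    rcases hIor with hI | hI
    · have halt : (ε1 * S10 * y.1 + Z1) / N10 < 1 := by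
        rw [div_lt_one hN1pos]
        have e : 0 ≤ ε1 * S10 * (1 - y.1) :=
          mul_nonneg (mul_nonneg hε1pos.le hS10.le) (by linarith [hy.1.2])
        have e' : ε1 * S10 * y.1 + Z1 = N10 - ε1 * I10 - ε1 * S10 * (1 - y.1) := by
          linear_combination hkey1
        linarith [e, mul_pos hε1pos hI, e']
      constructor
      · exact lt_of_le_of_lt
          (mul_le_of_le_one_right (Real.rpow_nonneg a0.le _)
            (Real.rpow_le_one b0.le b2.2 hq1.le))
          (Real.rpow_lt_one a0.le halt hp1)
      · exact lt_of_le_of_lt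
          (mul_le_of_le_one_right (Real.rpow_nonneg a0.le _)
            (Real.rpow_le_one b0.le b2.2 hq2.le))
          (Real.rpow_lt_one a0.le halt hp2)
    · have hblt : (ε2 * S20 * y.2 + Z2) / N20 < 1 := by
        rw [div_lt_one hN2pos]
        have e : 0 ≤ ε2 * S20 * (1 - y.2) :=
          mul_nonneg (mul_nonneg hε2pos.le hS20.le) (by linarith [hy.2.2])
        have e' : ε2 * S20 * y.2 + Z2 = N20 - ε2 * I20 - ε2 * S20 * (1 - y.2) := by
          linear_combination hkey2
        linarith [e, mul_pos hε2pos hI, e']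
      constructor
      · exact lt_of_le_of_lt
          (mul_le_of_le_one_left (Real.rpow_nonneg b0.le _)
            (Real.rpow_le_one a0.le b1.2 hp1.le))
          (Real.rpow_lt_one b0.le hblt hq1)
      · exact lt_of_le_of_lt
          (mul_le_of_le_one_left (Real.rpow_nonneg b0.le _)
            (Real.rpow_le_one a0.le b1.2 hp2.le))
          (Real.rpow_lt_one b0.le hblt hq2)
  -- relation between T and U
  have hψT : ∀ y : ℝ × ℝ, T (S10 * y.1, S20 * y.2) = (S10 * (U y).1, S20 * (U y).2) := by
    intro y
    rw [hT]
    simp only [Tmap, hUdef, mul_assoc]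
  -- the contraction on the subtype
  have hz : ((0:ℝ), (0:ℝ)) ∈ K' := (hKmem _).2 (by norm_num)
  haveI : Nonempty K' := ⟨⟨(0, 0), hz⟩⟩
  haveI : CompleteSpace K' := IsClosed.completeSpace_coe (hs := by rw [hK'def]; exact isClosed_Icc)
  set Λ' : NNReal := ⟨Λ, hΛpos.le⟩ with hΛ'def
  set U' : K' → K' := fun y => ⟨U y.val, (hmapsto y.val y.2).1⟩ with hU'def
  have hContr : ContractingWith Λ' U' := by
    constructor
    · exact_mod_cast hΛ1
    · refine LipschitzWith.of_dist_le_mul fun x y => ?_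
      rw [Subtype.dist_eq, Subtype.dist_eq]
      exact hUdist _ _ x.2 y.2
  set ystar : K' := ContractingWith.fixedPoint U' hContr with hystardef
  have hfix : U' ystar = ystar := hContr.fixedPoint_isFixedPt
  have hvfix : U ystar.val = ystar.val := congrArg Subtype.val hfix
  set y0 : K' := ⟨(0, 0), hz⟩ with hy0def
  have htend : Tendsto (fun n => U'^[n] y0) atTop (nhds ystar) :=
    hContr.tendsto_iterate_fixedPoint y0
  have hval : ∀ n, (U'^[n] y0).val = U^[n] (0, 0) := by
    intro n
    induction n with
    | zero => rfl
    | succ n ih => rw [Function.iterate_succ_apply', Function.iterate_succ_apply', ← ih]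
  have hTiter : ∀ n, T^[n] (0, 0) = (S10 * (U^[n] (0, 0)).1, S20 * (U^[n] (0, 0)).2) := by
    intro n
    induction n with
    | zero => simp
    | succ n ih =>
        rw [Function.iterate_succ_apply', ih, hψT, Function.iterate_succ_apply']
  -- the fixed point of T
  refine ⟨(S10 * ystar.val.1, S20 * ystar.val.2), ⟨?_, ?_, ?_, ?_⟩, ?_⟩
  · have h := hψT ystar.val
    rw [hvfix] at h
    exact h
  · have hpos := (hmapsto ystar.val ystar.2).2.1
    have hlt := (hUlt ystar.val ystar.2).1
    rw [hvfix] at hpos hlt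
    constructor
    · exact mul_pos hS10 hpos
    · calc S10 * ystar.val.1 < S10 * 1 := by
            exact mul_lt_mul_of_pos_left hlt hS10
        _ = S10 := mul_one S10
  · have hpos := (hmapsto ystar.val ystar.2).2.2
    have hlt := (hUlt ystar.val ystar.2).2
    rw [hvfix] at hpos hlt
    constructor
    · exact mul_pos hS20 hpos
    · calc S20 * ystar.val.2 < S20 * 1 := by
            exact mul_lt_mul_of_pos_left hlt hS20
        _ = S20 := mul_one S20
  · have h2 : Tendsto (fun n => (U'^[n] y0).val) atTop (nhds ystar.val) :=
      (continuous_subtype_val.tendsto ystar).comp htend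
    simp only [hval] at h2
    have hcont : Continuous (fun y : ℝ × ℝ => (S10 * y.1, S20 * y.2)) := by
      fun_prop
    have h3 := (hcont.tendsto ystar.val).comp h2
    have heq : (fun n => T^[n] ((0:ℝ), (0:ℝ)))
        = fun n => (S10 * (U^[n] (0, 0)).1, S20 * (U^[n] (0, 0)).2) := funext hTiter
    rw [heq]
    exact h3
  · intro Y hY1 hY2 hTY
    set y : ℝ × ℝ := (Y.1 / S10, Y.2 / S20) with hydef
    have hyK : y ∈ K' := by
      rw [hKmem]
      refine ⟨⟨?_, ?_⟩, ?_, ?_⟩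
      · exact (div_pos hY1.1 hS10).le
      · rw [div_le_one hS10]; exact hY1.2
      · exact (div_pos hY2.1 hS20).le
      · rw [div_le_one hS20]; exact hY2.2
    have hψy : (S10 * y.1, S20 * y.2) = Y := by
      rw [hydef]
      exact Prod.ext (by field_simp) (by field_simp)
    have h := hψT y
    rw [hψy, hTY] at h
    have hUy : U y = y := by
      apply Prod.ext
      · have hc1 : Y.1 = S10 * (U y).1 := congrArg Prod.fst h
        have hy1 : y.1 = Y.1 / S10 := rfl
        rw [hy1, eq_div_iff hS10.ne']
        linarith [hc1]
      · have hc2 : Y.2 = S20 * (U y).2 := congrArg Prod.snd h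
        have hy2 : y.2 = Y.2 / S20 := rfl
        rw [hy2, eq_div_iff hS20.ne']
        linarith [hc2]
    have hyfix : U' ⟨y, hyK⟩ = ⟨y, hyK⟩ := Subtype.ext hUy
    have := hContr.fixedPoint_unique (x := ⟨y, hyK⟩) hyfix
    rw [← hystardef] at this
    calc Y = (S10 * y.1, S20 * y.2) := hψy.symm
      _ = (S10 * ystar.val.1, S20 * ystar.val.2) := by rw [show y = ystar.val from congrArg Subtype.val this]
end

section
/- Let T be the final-size map built from positive parameters βᵢⱼ, γᵢ, μᵢ and initial data S₁₀, S₂₀ > 0, I₁₀, I₂₀ ≥ 0, R₁₀, R₂₀ ≥ 0, assume hypothesis H2d with Λ := max over i ∈ {1,2} of (βᵢ₁ S₁₀/((γ₁+μ₁)Z₁) + βᵢ₂ S₂₀/((γ₂+μ₂)Z₂)) < 1, and let S^∞ = (S₁^∞,S₂^∞) be the unique fixed point of T in (0,S₁₀]×(0,S₂₀]. Define the iterates X₀ = (0,0), Xₙ₊₁ = T(Xₙ), and for n ≥ 1 set Uₙ = (log xₙ,₁, log xₙ,₂) and U^∞ = (log S₁^∞, log S₂^∞). Then for all n ≥ 1,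 with δₙ := Λ^{n−1} · max_j |u₁,ⱼ − u^∞ⱼ|: (a) max_j |uₙ,ⱼ − u^∞ⱼ| ≤ δₙ, and (b) |xₙ,ᵢ − Sᵢ^∞| ≤ (e^{δₙ} − 1) · xₙ,ᵢ for i = 1,2. -/
open Filter

lemma log_lip (ε Z S : ℝ) (hε : 0 < ε) (hZ : 0 < Z) (hS : 0 < S)
    (x y : ℝ) (hx : 0 < x) (hxS : x ≤ S) (hy : 0 < y) (hyS : y ≤ S) :
    |Real.log (ε*x+Z) - Real.log (ε*y+Z)| ≤ (ε*S/Z) * |Real.log x - Real.log y| := by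
  wlog hxy : y ≤ x generalizing x y
  · rw [abs_sub_comm, abs_sub_comm (Real.log x)]
    exact this y x hy hyS hx hxS (le_of_not_ge hxy)
  obtain ⟨c, hcdef⟩ : ∃ c, c = Real.log x - Real.log y := ⟨_, rfl⟩
  rw [← hcdef]
  have hc : 0 ≤ c := by
    have := Real.log_le_log hy hxy
    rw [hcdef]; linarith
  obtain ⟨k, hkdef⟩ : ∃ k, k = ε*S/Z := ⟨_, rfl⟩
  rw [← hkdef]
  have hk : 0 ≤ k := by rw [hkdef]; positivity
  have h1 : 1 - y/x ≤ c := by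
    have := Real.log_le_sub_one_of_pos (show (0:ℝ) < y/x by positivity)
    rw [Real.log_div hy.ne' hx.ne'] at this
    have hx' : x ≠ 0 := hx.ne'
    have : Real.log y - Real.log x ≤ y/x - 1 := this
    linarith
  have h2 : ε*x - ε*y ≤ ε*S*c := by
    have hh := mul_le_mul_of_nonneg_left h1 (mul_pos hε hx).le
    have he : ε*x*(1 - y/x) = ε*x - ε*y := by field_simp
    nlinarith [hh, he, mul_nonneg (mul_nonneg hε.le hc) (sub_nonneg.2 hxS)]
  have h3 : ε*S*c ≤ Z*(Real.exp (k*c) - 1) := by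
    have := Real.add_one_le_exp (k*c)
    have hZc : Z * (k*c) = ε*S*c := by rw [hkdef]; field_simp
    nlinarith
  have h4 : ε*x + Z ≤ (ε*y+Z) * Real.exp (k*c) := by
    have he1 : 1 ≤ Real.exp (k*c) := Real.one_le_exp (by positivity)
    nlinarith [mul_nonneg (mul_nonneg hε.le hy.le) (sub_nonneg.2 he1)]
  have h5 : Real.log (ε*x+Z) ≤ Real.log (ε*y+Z) + k*c := by
    calc Real.log (ε*x+Z) ≤ Real.log ((ε*y+Z) * Real.exp (k*c)) :=
          Real.log_le_log (by positivity) h4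
      _ = Real.log (ε*y+Z) + k*c := by
          rw [Real.log_mul (by positivity) (Real.exp_pos _).ne', Real.log_exp]
  have h6 : Real.log (ε*y+Z) ≤ Real.log (ε*x+Z) := by
    apply Real.log_le_log (by positivity); linarith [mul_le_mul_of_nonneg_left hxy hε.le]
  rw [abs_of_nonneg (by linarith), abs_of_nonneg hc]
  linarith

lemma abs_sub_le_of_log (x s δ : ℝ) (hx : 0 < x) (hs : 0 < s)
    (h : |Real.log x - Real.log s| ≤ δ) : |x - s| ≤ (Real.exp δ - 1) * x := by
  have hδ : 0 ≤ δ := le_trans (abs_nonneg _) h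
  rcases le_total s x with hsx | hsx
  · have h1 : Real.log x ≤ Real.log s + δ := by
      have := abs_le.1 h; linarith [this.2]
    have h2 : x ≤ s * Real.exp δ := by
      calc x = Real.exp (Real.log x) := (Real.exp_log hx).symm
        _ ≤ Real.exp (Real.log s + δ) := Real.exp_le_exp.2 h1
        _ = s * Real.exp δ := by rw [Real.exp_add, Real.exp_log hs]
    rw [abs_of_nonneg (by linarith)]
    nlinarith [Real.one_le_exp hδ]
  · have h1 : Real.log s ≤ Real.log x + δ := by
      have := abs_le.1 h; linarith [this.1]
    have h2 : s ≤ x * Real.exp δ := by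
      calc s = Real.exp (Real.log s) := (Real.exp_log hs).symm
        _ ≤ Real.exp (Real.log x + δ) := Real.exp_le_exp.2 h1
        _ = x * Real.exp δ := by rw [Real.exp_add, Real.exp_log hx]
    rw [abs_of_nonpos (by linarith)]
    nlinarith

set_option maxHeartbeats 1000000 in
theorem stmt_18
    (β11 β12 β21 β22 γ1 γ2 μ1 μ2 : ℝ)
    (hβ11 : 0 < β11) (hβ12 : 0 < β12) (hβ21 : 0 < β21) (hβ22 : 0 < β22)
    (hγ1 : 0 < γ1) (hγ2 : 0 < γ2) (hμ1 : 0 < μ1) (hμ2 : 0 < μ2)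
    (S10 S20 I10 I20 R10 R20 : ℝ)
    (hS10 : 0 < S10) (hS20 : 0 < S20)
    (hI10 : 0 ≤ I10) (hI20 : 0 ≤ I20)
    (hR10 : 0 ≤ R10) (hR20 : 0 ≤ R20)
    (ε1 ε2 Z1 Z2 N10 N20 : ℝ)
    (hN10 : N10 = S10 + I10 + R10) (hN20 : N20 = S20 + I20 + R20)
    (hε1 : ε1 = μ1 / (γ1 + μ1)) (hε2 : ε2 = μ2 / (γ2 + μ2))
    (hZ1 : Z1 = (1 - ε1) * N10 + ε1 * R10) (hZ2 : Z2 = (1 - ε2) * N20 + ε2 * R20)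
    (Λ : ℝ)
    (hΛ : Λ = max (β11 * S10 / ((γ1 + μ1) * Z1) + β12 * S20 / ((γ2 + μ2) * Z2))
                  (β21 * S10 / ((γ1 + μ1) * Z1) + β22 * S20 / ((γ2 + μ2) * Z2)))
    (hΛ1 : Λ < 1)
    (T : ℝ × ℝ → ℝ × ℝ)
    (hT : T = Tmap β11 β12 β21 β22 μ1 μ2 S10 S20 ε1 ε2 Z1 Z2 N10 N20)
    (Sinf : ℝ × ℝ)
    (hfix : T Sinf = Sinf)
    (hbox : Sinf.1 ∈ Set.Ioc (0:ℝ) S10 ∧ Sinf.2 ∈ Set.Ioc (0:ℝ) S20)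
    (huniq : ∀ Y : ℝ × ℝ, Y.1 ∈ Set.Ioc (0:ℝ) S10 → Y.2 ∈ Set.Ioc (0:ℝ) S20 → T Y = Y → Y = Sinf) :
    ∀ n : ℕ, 1 ≤ n → ∀ δn : ℝ,
      δn = Λ ^ (n - 1) *
        max |Real.log (T^[1] (0, 0)).1 - Real.log Sinf.1|
            |Real.log (T^[1] (0, 0)).2 - Real.log Sinf.2| →
      (max |Real.log (T^[n] (0, 0)).1 - Real.log Sinf.1|
           |Real.log (T^[n] (0, 0)).2 - Real.log Sinf.2| ≤ δn) ∧
      |(T^[n] (0, 0)).1 - Sinf.1| ≤ (Real.exp δn - 1) * (T^[n] (0, 0)).1 ∧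
      |(T^[n] (0, 0)).2 - Sinf.2| ≤ (Real.exp δn - 1) * (T^[n] (0, 0)).2 := by
  have hγμ1 : 0 < γ1 + μ1 := by linarith
  have hγμ2 : 0 < γ2 + μ2 := by linarith
  have hε1pos : 0 < ε1 := by rw [hε1]; positivity
  have hε2pos : 0 < ε2 := by rw [hε2]; positivity
  have hε1lt : ε1 < 1 := by rw [hε1, div_lt_one hγμ1]; linarith
  have hε2lt : ε2 < 1 := by rw [hε2, div_lt_one hγμ2]; linarith
  have hN10p : 0 < N10 := by rw [hN10]; linarith
  have hN20p : 0 < N20 := by rw [hN20]; linarith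
  have hZ1p : 0 < Z1 := by rw [hZ1]; nlinarith [mul_nonneg hε1pos.le hR10]
  have hZ2p : 0 < Z2 := by rw [hZ2]; nlinarith [mul_nonneg hε2pos.le hR20]
  have hΛpos : 0 < Λ :=
    lt_of_lt_of_le (by positivity) (hΛ ▸ le_max_left _ _)
  -- invariance of the box
  have hstep : ∀ p : ℝ × ℝ, 0 ≤ p.1 → p.1 ≤ S10 → 0 ≤ p.2 → p.2 ≤ S20 →
      (0 < (T p).1 ∧ (T p).1 ≤ S10) ∧ (0 < (T p).2 ∧ (T p).2 ≤ S20) := by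
    intro p h1 h2 h3 h4
    have hb1 : 0 < (ε1 * p.1 + Z1) / N10 := by positivity
    have hb2 : 0 < (ε2 * p.2 + Z2) / N20 := by positivity
    have hb1' : (ε1 * p.1 + Z1) / N10 ≤ 1 := by
      rw [div_le_one hN10p, hZ1, hN10]
      nlinarith [mul_le_mul_of_nonneg_left h2 hε1pos.le, mul_nonneg hε1pos.le hI10]
    have hb2' : (ε2 * p.2 + Z2) / N20 ≤ 1 := by
      rw [div_le_one hN20p, hZ2, hN20]
      nlinarith [mul_le_mul_of_nonneg_left h4 hε2pos.le, mul_nonneg hε2pos.le hI20]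
    rw [hT]; simp only [Tmap]
    have r11 := Real.rpow_pos_of_pos hb1 (β11/μ1)
    have r12 := Real.rpow_pos_of_pos hb2 (β12/μ2)
    have r21 := Real.rpow_pos_of_pos hb1 (β21/μ1)
    have r22 := Real.rpow_pos_of_pos hb2 (β22/μ2)
    have u11 := Real.rpow_le_one hb1.le hb1' (by positivity : (0:ℝ) ≤ β11/μ1)
    have u12 := Real.rpow_le_one hb2.le hb2' (by positivity : (0:ℝ) ≤ β12/μ2)
    have u21 := Real.rpow_le_one hb1.le hb1' (by positivity : (0:ℝ) ≤ β21/μ1)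
    have u22 := Real.rpow_le_one hb2.le hb2' (by positivity : (0:ℝ) ≤ β22/μ2)
    refine ⟨⟨by positivity, ?_⟩, by positivity, ?_⟩
    · have w1 : S10 * ((ε1 * p.1 + Z1) / N10) ^ (β11/μ1) ≤ S10 * 1 :=
        mul_le_mul_of_nonneg_left u11 hS10.le
      have w2 : S10 * ((ε1 * p.1 + Z1) / N10) ^ (β11/μ1) * ((ε2 * p.2 + Z2) / N20) ^ (β12/μ2)
          ≤ S10 * ((ε1 * p.1 + Z1) / N10) ^ (β11/μ1) * 1 :=
        mul_le_mul_of_nonneg_left u12 (mul_pos hS10 r11).le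
      linarith
    · have w1 : S20 * ((ε1 * p.1 + Z1) / N10) ^ (β21/μ1) ≤ S20 * 1 :=
        mul_le_mul_of_nonneg_left u21 hS20.le
      have w2 : S20 * ((ε1 * p.1 + Z1) / N10) ^ (β21/μ1) * ((ε2 * p.2 + Z2) / N20) ^ (β22/μ2)
          ≤ S20 * ((ε1 * p.1 + Z1) / N10) ^ (β21/μ1) * 1 :=
        mul_le_mul_of_nonneg_left u22 (mul_pos hS20 r21).le
      linarith
  -- log formulas
  have hlog : ∀ p : ℝ × ℝ, 0 ≤ p.1 → 0 ≤ p.2 →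
      Real.log (T p).1 = Real.log S10
        + (β11/μ1) * (Real.log (ε1*p.1+Z1) - Real.log N10)
        + (β12/μ2) * (Real.log (ε2*p.2+Z2) - Real.log N20) ∧
      Real.log (T p).2 = Real.log S20
        + (β21/μ1) * (Real.log (ε1*p.1+Z1) - Real.log N10)
        + (β22/μ2) * (Real.log (ε2*p.2+Z2) - Real.log N20) := by
    intro p h1 h2
    have hb1 : 0 < (ε1 * p.1 + Z1) / N10 := by positivity
    have hb2 : 0 < (ε2 * p.2 + Z2) / N20 := by positivity
    rw [hT]; simp only [Tmap]
    constructor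
    · rw [Real.log_mul (by positivity) (Real.rpow_pos_of_pos hb2 _).ne',
        Real.log_mul hS10.ne' (Real.rpow_pos_of_pos hb1 _).ne',
        Real.log_rpow hb1, Real.log_rpow hb2,
        Real.log_div (by positivity) hN10p.ne', Real.log_div (by positivity) hN20p.ne']
    · rw [Real.log_mul (by positivity) (Real.rpow_pos_of_pos hb2 _).ne',
        Real.log_mul hS20.ne' (Real.rpow_pos_of_pos hb1 _).ne',
        Real.log_rpow hb1, Real.log_rpow hb2,
        Real.log_div (by positivity) hN10p.ne', Real.log_div (by positivity) hN20p.ne']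
  -- coefficient identities
  have hc11 : (β11/μ1) * (ε1*S10/Z1) = β11 * S10 / ((γ1+μ1)*Z1) := by
    rw [hε1]; field_simp
  have hc12 : (β12/μ2) * (ε2*S20/Z2) = β12 * S20 / ((γ2+μ2)*Z2) := by
    rw [hε2]; field_simp
  have hc21 : (β21/μ1) * (ε1*S10/Z1) = β21 * S10 / ((γ1+μ1)*Z1) := by
    rw [hε1]; field_simp
  have hc22 : (β22/μ2) * (ε2*S20/Z2) = β22 * S20 / ((γ2+μ2)*Z2) := by
    rw [hε2]; field_simp
  -- contraction in log coordinates
  have hcontr : ∀ p q : ℝ × ℝ, 0 < p.1 → p.1 ≤ S10 → 0 < p.2 → p.2 ≤ S20 →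
      0 < q.1 → q.1 ≤ S10 → 0 < q.2 → q.2 ≤ S20 →
      max |Real.log (T p).1 - Real.log (T q).1| |Real.log (T p).2 - Real.log (T q).2|
        ≤ Λ * max |Real.log p.1 - Real.log q.1| |Real.log p.2 - Real.log q.2| := by
    intro p q hp1 hp1' hp2 hp2' hq1 hq1' hq2 hq2'
    obtain ⟨ep1, ep2⟩ := hlog p hp1.le hp2.le
    obtain ⟨eq1, eq2⟩ := hlog q hq1.le hq2.le
    obtain ⟨M, hM⟩ : ∃ M, M = max |Real.log p.1 - Real.log q.1| |Real.log p.2 - Real.log q.2| :=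
      ⟨_, rfl⟩
    rw [← hM]
    have hM0 : 0 ≤ M := hM ▸ le_trans (abs_nonneg _) (le_max_left _ _)
    have l1 := log_lip ε1 Z1 S10 hε1pos hZ1p hS10 p.1 q.1 hp1 hp1' hq1 hq1'
    have l2 := log_lip ε2 Z2 S20 hε2pos hZ2p hS20 p.2 q.2 hp2 hp2' hq2 hq2'
    have m1 : |Real.log p.1 - Real.log q.1| ≤ M := hM ▸ le_max_left _ _
    have m2 : |Real.log p.2 - Real.log q.2| ≤ M := hM ▸ le_max_right _ _
    have hA : |Real.log (ε1*p.1+Z1) - Real.log (ε1*q.1+Z1)| ≤ (ε1*S10/Z1) * M :=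
      le_trans l1 (mul_le_mul_of_nonneg_left m1 (by positivity))
    have hB : |Real.log (ε2*p.2+Z2) - Real.log (ε2*q.2+Z2)| ≤ (ε2*S20/Z2) * M :=
      le_trans l2 (mul_le_mul_of_nonneg_left m2 (by positivity))
    have key1 : |Real.log (T p).1 - Real.log (T q).1| ≤ Λ * M := by
      have e : Real.log (T p).1 - Real.log (T q).1
          = (β11/μ1) * (Real.log (ε1*p.1+Z1) - Real.log (ε1*q.1+Z1))
            + (β12/μ2) * (Real.log (ε2*p.2+Z2) - Real.log (ε2*q.2+Z2)) := by
        rw [ep1, eq1]; ring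
      have hΛ' : β11 * S10 / ((γ1+μ1)*Z1) + β12 * S20 / ((γ2+μ2)*Z2) ≤ Λ :=
        hΛ ▸ le_max_left _ _
      calc |Real.log (T p).1 - Real.log (T q).1|
          ≤ |(β11/μ1) * (Real.log (ε1*p.1+Z1) - Real.log (ε1*q.1+Z1))|
            + |(β12/μ2) * (Real.log (ε2*p.2+Z2) - Real.log (ε2*q.2+Z2))| := by
            rw [e]; exact abs_add_le _ _
        _ = (β11/μ1) * |Real.log (ε1*p.1+Z1) - Real.log (ε1*q.1+Z1)|
            + (β12/μ2) * |Real.log (ε2*p.2+Z2) - Real.log (ε2*q.2+Z2)| := by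
            rw [abs_mul, abs_mul, abs_of_pos (by positivity : (0:ℝ) < β11/μ1),
              abs_of_pos (by positivity : (0:ℝ) < β12/μ2)]
        _ ≤ (β11/μ1) * ((ε1*S10/Z1) * M) + (β12/μ2) * ((ε2*S20/Z2) * M) := by
            gcongr <;> positivity
        _ = (β11 * S10 / ((γ1+μ1)*Z1) + β12 * S20 / ((γ2+μ2)*Z2)) * M := by
            rw [← hc11, ← hc12]; ring
        _ ≤ Λ * M := mul_le_mul_of_nonneg_right hΛ' hM0
    have key2 : |Real.log (T p).2 - Real.log (T q).2| ≤ Λ * M := by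
      have e : Real.log (T p).2 - Real.log (T q).2
          = (β21/μ1) * (Real.log (ε1*p.1+Z1) - Real.log (ε1*q.1+Z1))
            + (β22/μ2) * (Real.log (ε2*p.2+Z2) - Real.log (ε2*q.2+Z2)) := by
        rw [ep2, eq2]; ring
      have hΛ' : β21 * S10 / ((γ1+μ1)*Z1) + β22 * S20 / ((γ2+μ2)*Z2) ≤ Λ :=
        hΛ ▸ le_max_right _ _
      calc |Real.log (T p).2 - Real.log (T q).2|
          ≤ |(β21/μ1) * (Real.log (ε1*p.1+Z1) - Real.log (ε1*q.1+Z1))|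
            + |(β22/μ2) * (Real.log (ε2*p.2+Z2) - Real.log (ε2*q.2+Z2))| := by
            rw [e]; exact abs_add_le _ _
        _ = (β21/μ1) * |Real.log (ε1*p.1+Z1) - Real.log (ε1*q.1+Z1)|
            + (β22/μ2) * |Real.log (ε2*p.2+Z2) - Real.log (ε2*q.2+Z2)| := by
            rw [abs_mul, abs_mul, abs_of_pos (by positivity : (0:ℝ) < β21/μ1),
              abs_of_pos (by positivity : (0:ℝ) < β22/μ2)]
        _ ≤ (β21/μ1) * ((ε1*S10/Z1) * M) + (β22/μ2) * ((ε2*S20/Z2) * M) := by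
            gcongr <;> positivity
        _ = (β21 * S10 / ((γ1+μ1)*Z1) + β22 * S20 / ((γ2+μ2)*Z2)) * M := by
            rw [← hc21, ← hc22]; ring
        _ ≤ Λ * M := mul_le_mul_of_nonneg_right hΛ' hM0
    exact max_le key1 key2
  -- iteration
  have hiter : ∀ m : ℕ,
      ((0 < (T^[m+1] (0,0)).1 ∧ (T^[m+1] (0,0)).1 ≤ S10) ∧
       (0 < (T^[m+1] (0,0)).2 ∧ (T^[m+1] (0,0)).2 ≤ S20)) ∧
      max |Real.log (T^[m+1] (0,0)).1 - Real.log Sinf.1|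
          |Real.log (T^[m+1] (0,0)).2 - Real.log Sinf.2|
        ≤ Λ^m * max |Real.log (T^[1] (0,0)).1 - Real.log Sinf.1|
                    |Real.log (T^[1] (0,0)).2 - Real.log Sinf.2| := by
    intro m
    induction m with
    | zero =>
      refine ⟨?_, by simp⟩
      have := hstep (0,0) le_rfl hS10.le le_rfl hS20.le
      simpa using this
    | succ m ih =>
      have hit : T^[m+1+1] (0,0) = T (T^[m+1] (0,0)) := Function.iterate_succ_apply' T _ _
      constructor
      · rw [hit]
        exact hstep _ ih.1.1.1.le ih.1.1.2 ih.1.2.1.le ih.1.2.2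
      · rw [hit]
        have hc := hcontr (T^[m+1] (0,0)) Sinf ih.1.1.1 ih.1.1.2 ih.1.2.1 ih.1.2.2
          hbox.1.1 hbox.1.2 hbox.2.1 hbox.2.2
        rw [hfix] at hc
        calc max |Real.log (T (T^[m+1] (0,0))).1 - Real.log Sinf.1|
              |Real.log (T (T^[m+1] (0,0))).2 - Real.log Sinf.2|
            ≤ Λ * max |Real.log (T^[m+1] (0,0)).1 - Real.log Sinf.1|
                  |Real.log (T^[m+1] (0,0)).2 - Real.log Sinf.2| := hc
          _ ≤ Λ * (Λ^m * max |Real.log (T^[1] (0,0)).1 - Real.log Sinf.1|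
                  |Real.log (T^[1] (0,0)).2 - Real.log Sinf.2|) :=
              mul_le_mul_of_nonneg_left ih.2 hΛpos.le
          _ = Λ^(m+1) * max |Real.log (T^[1] (0,0)).1 - Real.log Sinf.1|
                  |Real.log (T^[1] (0,0)).2 - Real.log Sinf.2| := by ring
  -- conclusion
  intro n hn δn hδ
  obtain ⟨m, rfl⟩ : ∃ m, n = m + 1 := ⟨n - 1, (Nat.succ_pred_eq_of_pos hn).symm⟩
  have hδ' : δn = Λ^m * max |Real.log (T^[1] (0,0)).1 - Real.log Sinf.1|
      |Real.log (T^[1] (0,0)).2 - Real.log Sinf.2| := by simpa using hδ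
  obtain ⟨⟨⟨hx1, hx1'⟩, ⟨hx2, hx2'⟩⟩, hMn⟩ := hiter m
  have ha : max |Real.log (T^[m+1] (0,0)).1 - Real.log Sinf.1|
      |Real.log (T^[m+1] (0,0)).2 - Real.log Sinf.2| ≤ δn := by rw [hδ']; exact hMn
  exact ⟨ha,
    abs_sub_le_of_log _ _ _ hx1 hbox.1.1 (le_trans (le_max_left _ _) ha),
    abs_sub_le_of_log _ _ _ hx2 hbox.2.1 (le_trans (le_max_right _ _) ha)⟩
end

section
/- Fix positive γ₁, γ₂, μ₁, μ₂ and initial data S₁₀, S₂₀ > 0, I₁₀, I₂₀ ≥ 0, R₁₀, R₂₀ ≥ 0, and let β = (βᵢⱼ) and β̃ = (β̃ᵢⱼ) be two sets of positive transmission parameters with β̃ᵢⱼ ≥ βᵢⱼ for all i,j ∈ {1,2}. Let T^β and T^β̃ be the corresponding final-size maps. Then: (a) for every X = (x₁,x₂) with 0 ≤ xⱼ ≤ Sⱼ₀ one has Tᵢ^β̃(X) ≤ Tᵢ^β(X) for i = 1,2; and (b) the limits S^∞(β) = lim_{n→∞} (T^β)ⁿ(0,0) and S^∞(β̃) = lim_{n→∞}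 (T^β̃)ⁿ(0,0) exist and satisfy S^∞(β̃) ≤ S^∞(β) componentwise. In particular, increasing any transmission coefficient can only decrease the final number of susceptibles in each group. -/
open Filter
set_option maxHeartbeats 1000000

private lemma aux_mono {S p p' q q' e f : ℝ} (hS : 0 ≤ S) (hp : 0 ≤ p) (hpp : p ≤ p')
    (hq : 0 ≤ q) (hqq : q ≤ q') (he : 0 ≤ e) (hf : 0 ≤ f) :
    S * p ^ e * q ^ f ≤ S * p' ^ e * q' ^ f := by
  have h1 : p ^ e ≤ p' ^ e := Real.rpow_le_rpow hp hpp he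
  have h2 : q ^ f ≤ q' ^ f := Real.rpow_le_rpow hq hqq hf
  exact mul_le_mul (mul_le_mul le_rfl h1 (Real.rpow_nonneg hp e) hS) h2
    (Real.rpow_nonneg hq f) (mul_nonneg hS (Real.rpow_nonneg (hp.trans hpp) e))

private lemma aux_exp {S p q e e' f f' : ℝ} (hS : 0 ≤ S) (hp : 0 < p) (hp1 : p ≤ 1)
    (hq : 0 < q) (hq1 : q ≤ 1) (hee : e ≤ e') (hff : f ≤ f') :
    S * p ^ e' * q ^ f' ≤ S * p ^ e * q ^ f := by
  have h1 : p ^ e' ≤ p ^ e := Real.rpow_le_rpow_of_exponent_ge hp hp1 hee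
  have h2 : q ^ f' ≤ q ^ f := Real.rpow_le_rpow_of_exponent_ge hq hq1 hff
  exact mul_le_mul (mul_le_mul le_rfl h1 (Real.rpow_nonneg hp.le _) hS) h2
    (Real.rpow_nonneg hq.le _) (mul_nonneg hS (Real.rpow_nonneg hp.le _))

private lemma aux_bound {S p q e f : ℝ} (hS : 0 ≤ S) (hp : 0 ≤ p) (hp1 : p ≤ 1)
    (hq : 0 ≤ q) (hq1 : q ≤ 1) (he : 0 ≤ e) (hf : 0 ≤ f) :
    S * p ^ e * q ^ f ≤ S := by
  calc S * p ^ e * q ^ f ≤ S * 1 * 1 :=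
        mul_le_mul (mul_le_mul le_rfl (Real.rpow_le_one hp hp1 he) (Real.rpow_nonneg hp e) hS)
          (Real.rpow_le_one hq hq1 hf) (Real.rpow_nonneg hq f)
          (mul_nonneg hS zero_le_one)
    _ = S := by ring

theorem stmt_19
    (γ1 γ2 μ1 μ2 : ℝ)
    (hγ1 : 0 < γ1) (hγ2 : 0 < γ2) (hμ1 : 0 < μ1) (hμ2 : 0 < μ2)
    (β11 β12 β21 β22 βt11 βt12 βt21 βt22 : ℝ)
    (hβ11 : 0 < β11) (hβ12 : 0 < β12) (hβ21 : 0 < β21) (hβ22 : 0 < β22)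
    (hβt11 : 0 < βt11) (hβt12 : 0 < βt12) (hβt21 : 0 < βt21) (hβt22 : 0 < βt22)
    (hle11 : β11 ≤ βt11) (hle12 : β12 ≤ βt12) (hle21 : β21 ≤ βt21) (hle22 : β22 ≤ βt22)
    (S10 S20 I10 I20 R10 R20 : ℝ)
    (hS10 : 0 < S10) (hS20 : 0 < S20)
    (hI10 : 0 ≤ I10) (hI20 : 0 ≤ I20)
    (hR10 : 0 ≤ R10) (hR20 : 0 ≤ R20)
    (ε1 ε2 Z1 Z2 N10 N20 : ℝ)
    (hN10 : N10 = S10 + I10 + R10) (hN20 : N20 = S20 + I20 + R20)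
    (hε1 : ε1 = μ1 / (γ1 + μ1)) (hε2 : ε2 = μ2 / (γ2 + μ2))
    (hZ1 : Z1 = (1 - ε1) * N10 + ε1 * R10) (hZ2 : Z2 = (1 - ε2) * N20 + ε2 * R20)
    (T Tt : ℝ × ℝ → ℝ × ℝ)
    (hT : T = Tmap β11 β12 β21 β22 μ1 μ2 S10 S20 ε1 ε2 Z1 Z2 N10 N20)
    (hTt : Tt = Tmap βt11 βt12 βt21 βt22 μ1 μ2 S10 S20 ε1 ε2 Z1 Z2 N10 N20) :
    (∀ x1 x2 : ℝ, 0 ≤ x1 → x1 ≤ S10 → 0 ≤ x2 → x2 ≤ S20 →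
      (Tt (x1, x2)).1 ≤ (T (x1, x2)).1 ∧ (Tt (x1, x2)).2 ≤ (T (x1, x2)).2) ∧
    ∃ Sb St : ℝ × ℝ,
      Tendsto (fun n => T^[n] (0, 0)) atTop (nhds Sb) ∧
      Tendsto (fun n => Tt^[n] (0, 0)) atTop (nhds St) ∧
      St.1 ≤ Sb.1 ∧ St.2 ≤ Sb.2 := by
  have hN10pos : 0 < N10 := by rw [hN10]; linarith
  have hN20pos : 0 < N20 := by rw [hN20]; linarith
  have hε1pos : 0 < ε1 := by rw [hε1]; positivity
  have hε2pos : 0 < ε2 := by rw [hε2]; positivity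
  have hε1lt : ε1 < 1 := by rw [hε1, div_lt_one (by linarith)]; linarith
  have hε2lt : ε2 < 1 := by rw [hε2, div_lt_one (by linarith)]; linarith
  have hZ1pos : 0 < Z1 := by
    rw [hZ1]
    nlinarith [mul_pos (show (0:ℝ) < 1 - ε1 by linarith) hN10pos,
      mul_nonneg hε1pos.le hR10]
  have hZ2pos : 0 < Z2 := by
    rw [hZ2]
    nlinarith [mul_pos (show (0:ℝ) < 1 - ε2 by linarith) hN20pos,
      mul_nonneg hε2pos.le hR20]
  -- base bounds
  have hb1 : ∀ x : ℝ, 0 ≤ x → x ≤ S10 →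
      0 < (ε1 * x + Z1) / N10 ∧ (ε1 * x + Z1) / N10 ≤ 1 := by
    intro x hx hxS
    refine ⟨by positivity, ?_⟩
    rw [div_le_one hN10pos, hZ1, hN10]
    have h := mul_le_mul_of_nonneg_left (show x + R10 ≤ S10 + I10 + R10 by linarith) hε1pos.le
    nlinarith [h]
  have hb2 : ∀ x : ℝ, 0 ≤ x → x ≤ S20 →
      0 < (ε2 * x + Z2) / N20 ∧ (ε2 * x + Z2) / N20 ≤ 1 := by
    intro x hx hxS
    refine ⟨by positivity, ?_⟩
    rw [div_le_one hN20pos, hZ2, hN20]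
    have h := mul_le_mul_of_nonneg_left (show x + R20 ≤ S20 + I20 + R20 by linarith) hε2pos.le
    nlinarith [h]
  -- maps box to box
  have hbox : ∀ (c11 c12 c21 c22 : ℝ), 0 < c11 → 0 < c12 → 0 < c21 → 0 < c22 →
      ∀ X : ℝ × ℝ, 0 ≤ X.1 → X.1 ≤ S10 → 0 ≤ X.2 → X.2 ≤ S20 →
      0 ≤ (Tmap c11 c12 c21 c22 μ1 μ2 S10 S20 ε1 ε2 Z1 Z2 N10 N20 X).1 ∧
      (Tmap c11 c12 c21 c22 μ1 μ2 S10 S20 ε1 ε2 Z1 Z2 N10 N20 X).1 ≤ S10 ∧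
      0 ≤ (Tmap c11 c12 c21 c22 μ1 μ2 S10 S20 ε1 ε2 Z1 Z2 N10 N20 X).2 ∧
      (Tmap c11 c12 c21 c22 μ1 μ2 S10 S20 ε1 ε2 Z1 Z2 N10 N20 X).2 ≤ S20 := by
    intro c11 c12 c21 c22 hc11 hc12 hc21 hc22 X hX1 hX1S hX2 hX2S
    obtain ⟨hp, hp1⟩ := hb1 X.1 hX1 hX1S
    obtain ⟨hq, hq1⟩ := hb2 X.2 hX2 hX2S
    refine ⟨?_, ?_, ?_, ?_⟩
    · simp only [Tmap]; positivity
    · exact aux_bound hS10.le hp.le hp1 hq.le hq1 (by positivity) (by positivity)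
    · simp only [Tmap]; positivity
    · exact aux_bound hS20.le hp.le hp1 hq.le hq1 (by positivity) (by positivity)
  -- monotonicity
  have hmono : ∀ (c11 c12 c21 c22 : ℝ), 0 < c11 → 0 < c12 → 0 < c21 → 0 < c22 →
      ∀ X Y : ℝ × ℝ, 0 ≤ X.1 → 0 ≤ X.2 → X.1 ≤ Y.1 → X.2 ≤ Y.2 →
      (Tmap c11 c12 c21 c22 μ1 μ2 S10 S20 ε1 ε2 Z1 Z2 N10 N20 X).1 ≤
        (Tmap c11 c12 c21 c22 μ1 μ2 S10 S20 ε1 ε2 Z1 Z2 N10 N20 Y).1 ∧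
      (Tmap c11 c12 c21 c22 μ1 μ2 S10 S20 ε1 ε2 Z1 Z2 N10 N20 X).2 ≤
        (Tmap c11 c12 c21 c22 μ1 μ2 S10 S20 ε1 ε2 Z1 Z2 N10 N20 Y).2 := by
    intro c11 c12 c21 c22 hc11 hc12 hc21 hc22 X Y hX1 hX2 hXY1 hXY2
    have hp : (0:ℝ) ≤ (ε1 * X.1 + Z1) / N10 := by positivity
    have hq : (0:ℝ) ≤ (ε2 * X.2 + Z2) / N20 := by positivity
    have hpp : (ε1 * X.1 + Z1) / N10 ≤ (ε1 * Y.1 + Z1) / N10 := by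
      refine div_le_div_of_nonneg_right ?_ hN10pos.le; nlinarith
    have hqq : (ε2 * X.2 + Z2) / N20 ≤ (ε2 * Y.2 + Z2) / N20 := by
      refine div_le_div_of_nonneg_right ?_ hN20pos.le; nlinarith
    constructor
    · exact aux_mono hS10.le hp hpp hq hqq (by positivity) (by positivity)
    · exact aux_mono hS20.le hp hpp hq hqq (by positivity) (by positivity)
  -- part (a)
  have parta : ∀ x1 x2 : ℝ, 0 ≤ x1 → x1 ≤ S10 → 0 ≤ x2 → x2 ≤ S20 →
      (Tt (x1, x2)).1 ≤ (T (x1, x2)).1 ∧ (Tt (x1, x2)).2 ≤ (T (x1, x2)).2 := by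
    intro x1 x2 hx1 hx1S hx2 hx2S
    obtain ⟨hp, hp1⟩ := hb1 x1 hx1 hx1S
    obtain ⟨hq, hq1⟩ := hb2 x2 hx2 hx2S
    rw [hT, hTt]
    constructor
    · exact aux_exp hS10.le hp hp1 hq hq1
        (div_le_div_of_nonneg_right hle11 hμ1.le) (div_le_div_of_nonneg_right hle12 hμ2.le)
    · exact aux_exp hS20.le hp hp1 hq hq1
        (div_le_div_of_nonneg_right hle21 hμ1.le) (div_le_div_of_nonneg_right hle22 hμ2.le)
  refine ⟨parta, ?_⟩
  set a : ℕ → ℝ × ℝ := fun n => T^[n] (0, 0) with ha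
  set b : ℕ → ℝ × ℝ := fun n => Tt^[n] (0, 0) with hb
  have hTbox : ∀ X : ℝ × ℝ, 0 ≤ X.1 → X.1 ≤ S10 → 0 ≤ X.2 → X.2 ≤ S20 →
      0 ≤ (T X).1 ∧ (T X).1 ≤ S10 ∧ 0 ≤ (T X).2 ∧ (T X).2 ≤ S20 := by
    intro X h1 h2 h3 h4; rw [hT]; exact hbox _ _ _ _ hβ11 hβ12 hβ21 hβ22 X h1 h2 h3 h4
  have hTtbox : ∀ X : ℝ × ℝ, 0 ≤ X.1 → X.1 ≤ S10 → 0 ≤ X.2 → X.2 ≤ S20 →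
      0 ≤ (Tt X).1 ∧ (Tt X).1 ≤ S10 ∧ 0 ≤ (Tt X).2 ∧ (Tt X).2 ≤ S20 := by
    intro X h1 h2 h3 h4; rw [hTt]; exact hbox _ _ _ _ hβt11 hβt12 hβt21 hβt22 X h1 h2 h3 h4
  have habox : ∀ n, 0 ≤ (a n).1 ∧ (a n).1 ≤ S10 ∧ 0 ≤ (a n).2 ∧ (a n).2 ≤ S20 := by
    intro n
    induction n with
    | zero => exact ⟨le_refl 0, hS10.le, le_refl 0, hS20.le⟩
    | succ n ih =>
      have : a (n + 1) = T (a n) := Function.iterate_succ_apply' T n (0, 0)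
      rw [this]
      exact hTbox (a n) ih.1 ih.2.1 ih.2.2.1 ih.2.2.2
  have hbbox : ∀ n, 0 ≤ (b n).1 ∧ (b n).1 ≤ S10 ∧ 0 ≤ (b n).2 ∧ (b n).2 ≤ S20 := by
    intro n
    induction n with
    | zero => exact ⟨le_refl 0, hS10.le, le_refl 0, hS20.le⟩
    | succ n ih =>
      have : b (n + 1) = Tt (b n) := Function.iterate_succ_apply' Tt n (0, 0)
      rw [this]
      exact hTtbox (b n) ih.1 ih.2.1 ih.2.2.1 ih.2.2.2
  have hTmono : ∀ X Y : ℝ × ℝ, 0 ≤ X.1 → 0 ≤ X.2 → X.1 ≤ Y.1 → X.2 ≤ Y.2 →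
      (T X).1 ≤ (T Y).1 ∧ (T X).2 ≤ (T Y).2 := by
    intro X Y h1 h2 h3 h4; rw [hT]; exact hmono _ _ _ _ hβ11 hβ12 hβ21 hβ22 X Y h1 h2 h3 h4
  have hTtmono : ∀ X Y : ℝ × ℝ, 0 ≤ X.1 → 0 ≤ X.2 → X.1 ≤ Y.1 → X.2 ≤ Y.2 →
      (Tt X).1 ≤ (Tt Y).1 ∧ (Tt X).2 ≤ (Tt Y).2 := by
    intro X Y h1 h2 h3 h4; rw [hTt]; exact hmono _ _ _ _ hβt11 hβt12 hβt21 hβt22 X Y h1 h2 h3 h4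
  have hastep : ∀ n, (a n).1 ≤ (a (n + 1)).1 ∧ (a n).2 ≤ (a (n + 1)).2 := by
    intro n
    induction n with
    | zero => exact ⟨(habox 1).1, (habox 1).2.2.1⟩
    | succ n ih =>
      have e1 : a (n + 1) = T (a n) := Function.iterate_succ_apply' T n (0, 0)
      have e2 : a (n + 2) = T (a (n + 1)) := Function.iterate_succ_apply' T (n + 1) (0, 0)
      rw [e1, e2]
      exact hTmono (a n) (a (n + 1)) (habox n).1 (habox n).2.2.1 ih.1 ih.2
  have hbstep : ∀ n, (b n).1 ≤ (b (n + 1)).1 ∧ (b n).2 ≤ (b (n + 1)).2 := by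
    intro n
    induction n with
    | zero => exact ⟨(hbbox 1).1, (hbbox 1).2.2.1⟩
    | succ n ih =>
      have e1 : b (n + 1) = Tt (b n) := Function.iterate_succ_apply' Tt n (0, 0)
      have e2 : b (n + 2) = Tt (b (n + 1)) := Function.iterate_succ_apply' Tt (n + 1) (0, 0)
      rw [e1, e2]
      exact hTtmono (b n) (b (n + 1)) (hbbox n).1 (hbbox n).2.2.1 ih.1 ih.2
  have hamono1 : Monotone fun n => (a n).1 := monotone_nat_of_le_succ fun n => (hastep n).1
  have hamono2 : Monotone fun n => (a n).2 := monotone_nat_of_le_succ fun n => (hastep n).2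
  have hbmono1 : Monotone fun n => (b n).1 := monotone_nat_of_le_succ fun n => (hbstep n).1
  have hbmono2 : Monotone fun n => (b n).2 := monotone_nat_of_le_succ fun n => (hbstep n).2
  have hbdd1 : BddAbove (Set.range fun n => (a n).1) :=
    ⟨S10, by rintro y ⟨n, rfl⟩; exact (habox n).2.1⟩
  have hbdd2 : BddAbove (Set.range fun n => (a n).2) :=
    ⟨S20, by rintro y ⟨n, rfl⟩; exact (habox n).2.2.2⟩
  have hbdd1' : BddAbove (Set.range fun n => (b n).1) :=
    ⟨S10, by rintro y ⟨n, rfl⟩; exact (hbbox n).2.1⟩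
  have hbdd2' : BddAbove (Set.range fun n => (b n).2) :=
    ⟨S20, by rintro y ⟨n, rfl⟩; exact (hbbox n).2.2.2⟩
  have hL1 : Tendsto (fun n => (a n).1) atTop (nhds (⨆ n, (a n).1)) :=
    tendsto_atTop_ciSup hamono1 hbdd1
  have hL2 : Tendsto (fun n => (a n).2) atTop (nhds (⨆ n, (a n).2)) :=
    tendsto_atTop_ciSup hamono2 hbdd2
  have hM1 : Tendsto (fun n => (b n).1) atTop (nhds (⨆ n, (b n).1)) :=
    tendsto_atTop_ciSup hbmono1 hbdd1'
  have hM2 : Tendsto (fun n => (b n).2) atTop (nhds (⨆ n, (b n).2)) :=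
    tendsto_atTop_ciSup hbmono2 hbdd2'
  -- comparison
  have hcomp : ∀ n, (b n).1 ≤ (a n).1 ∧ (b n).2 ≤ (a n).2 := by
    intro n
    induction n with
    | zero => exact ⟨le_refl 0, le_refl 0⟩
    | succ n ih =>
      have e1 : a (n + 1) = T (a n) := Function.iterate_succ_apply' T n (0, 0)
      have e2 : b (n + 1) = Tt (b n) := Function.iterate_succ_apply' Tt n (0, 0)
      rw [e1, e2]
      have h1 := hTtmono (b n) (a n) (hbbox n).1 (hbbox n).2.2.1 ih.1 ih.2
      have h2 := parta (a n).1 (a n).2 (habox n).1 (habox n).2.1 (habox n).2.2.1 (habox n).2.2.2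
      exact ⟨h1.1.trans h2.1, h1.2.trans h2.2⟩
  refine ⟨(⨆ n, (a n).1, ⨆ n, (a n).2), (⨆ n, (b n).1, ⨆ n, (b n).2),
    hL1.prodMk_nhds hL2, hM1.prodMk_nhds hM2,
    le_of_tendsto_of_tendsto' hM1 hL1 fun n => (hcomp n).1,
    le_of_tendsto_of_tendsto' hM2 hL2 fun n => (hcomp n).2⟩
end
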